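/- arXiv:2407.05776 — 9 statements merged into one kernel-verified Lean document; each statement's English description precedes it below -/
import Mathlib

section
/- Let X be a topological space and let W ⊆ X × X be open; for x ∈ X set W_x = {y ∈ X : (x,y) ∈ W}. Then the map X × F(X) → F(X), (x,F) ↦ closure of (W_x ∩ F), is continuous, where F(X) carries the lower topology (and X × F(X) the product of the topology of X with the lower topology). -/
open TopologicalSpace Set

/-- The lower topology on the space `F(X)` of closed subsets of a topological space `X`,
generated by the sets `I_U = {F : F(X) | F ∩ U ≠ ∅}` for `U` open in `X`. -/
def lowerTop (X : Type*) [TopologicalSpace X] : TopologicalSpace (Closeds X) :=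
  TopologicalSpace.generateFrom
    {S : Set (Closeds X) |
      ∃ U : Set X, IsOpen U ∧ S = {F : Closeds X | ((F : Set X) ∩ U).Nonempty}}

/-- For `W ⊆ X × X` open, with `W_x = {y | (x, y) ∈ W}`, the map
`(x, F) ↦ closure (W_x ∩ F)` is continuous from `X × F(X)` (product of the topology of `X`
with the lower topology) to `F(X)` with the lower topology. -/
theorem continuous_closure_inter_fattening
    {X : Type*} [TopologicalSpace X] (W : Set (X × X)) (hW : IsOpen W) :
    @Continuous (X × Closeds X) (Closeds X)
      (@instTopologicalSpaceProd X (Closeds X) _ (lowerTop X)) (lowerTop X)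
      (fun p => ⟨closure ({y : X | (p.1, y) ∈ W} ∩ (p.2 : Set X)), isClosed_closure⟩) := by
  letI : TopologicalSpace (Closeds X) := lowerTop X
  rw [show lowerTop X = TopologicalSpace.generateFrom
    {S : Set (Closeds X) |
      ∃ U : Set X, IsOpen U ∧ S = {F : Closeds X | ((F : Set X) ∩ U).Nonempty}} from rfl,
    continuous_generateFrom_iff]
  rintro S ⟨U, hU, rfl⟩
  -- the preimage equals the set of pairs (x, F) with W_x ∩ F ∩ U nonempty
  have key : (fun p : X × Closeds X =>
      (⟨closure ({y : X | (p.1, y) ∈ W} ∩ (p.2 : Set X)), isClosed_closure⟩ : Closeds X)) ⁻¹'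
        {F : Closeds X | ((F : Set X) ∩ U).Nonempty} =
      {p : X × Closeds X | ({y : X | (p.1, y) ∈ W} ∩ (p.2 : Set X) ∩ U).Nonempty} := by
    ext p
    simp only [mem_preimage, mem_setOf_eq]
    constructor
    · rintro ⟨z, hz, hzU⟩
      rcases mem_closure_iff.mp hz U hU hzU with ⟨y, hyU, hy⟩
      exact ⟨y, hy, hyU⟩
    · rintro ⟨y, hy, hyU⟩
      exact ⟨y, subset_closure hy, hyU⟩
  rw [key]
  rw [isOpen_iff_forall_mem_open]
  rintro ⟨x, F⟩ ⟨y, ⟨hyW, hyF⟩, hyU⟩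
  rcases isOpen_prod_iff.mp hW x y hyW with ⟨V, N, hV, hN, hxV, hyN, hVN⟩
  refine ⟨V ×ˢ {F : Closeds X | ((F : Set X) ∩ (N ∩ U)).Nonempty}, ?_, ?_, ?_⟩
  · rintro ⟨x', F'⟩ ⟨hx', z, hzF', hzN, hzU⟩
    exact ⟨z, ⟨hVN (Set.mk_mem_prod hx' hzN), hzF'⟩, hzU⟩
  · exact (hV.prod (TopologicalSpace.isOpen_generateFrom_of_mem
      ⟨N ∩ U, hN.inter hU, rfl⟩))
  · exact ⟨hxV, y, hyF, hyN, hyU⟩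
end

section
/- Let (X,d) be a metric space. Then the topology induced by the lower topology on the set F*(X) of nonempty closed subsets of X equals the coarsest topology on F*(X) making the map F ↦ d(x,F) upper semicontinuous for every x ∈ X, where d(x,F) = inf_{y ∈ F} d(x,y). -/
open TopologicalSpace Set

/-- The set `F*(X)` of nonempty closed subsets of `X`. -/
abbrev NClosed (X : Type*) [TopologicalSpace X] := {F : Set X // IsClosed F ∧ F.Nonempty}

/-- The topology on `F*(X)` induced by the lower topology on `F(X)`. -/
def lowerTopN (X : Type*) [TopologicalSpace X] : TopologicalSpace (NClosed X) :=
  TopologicalSpace.induced (fun F : NClosed X => (⟨F.1, F.2.1⟩ : Closeds X)) (lowerTop X)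

lemma key_ball (X : Type*) [MetricSpace X] (x : X) (r : ℝ) :
    {F : NClosed X | (F.1 ∩ Metric.ball x r).Nonempty}
      = {F : NClosed X | Metric.infDist x F.1 < r} := by
  ext F
  simp only [Set.mem_setOf_eq]
  rw [Metric.infDist_lt_iff F.2.2]
  constructor
  · rintro ⟨z, hz, hzb⟩
    exact ⟨z, hz, by simpa [dist_comm] using hzb⟩
  · rintro ⟨z, hz, hd⟩
    exact ⟨z, hz, by simpa [dist_comm, Metric.mem_ball] using hd⟩

/-- For a metric space `(X, d)`, the topology induced by the lower topology on the set `F*(X)`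
of nonempty closed subsets of `X` is the coarsest topology making `F ↦ d(x, F)` upper
semicontinuous for every `x ∈ X`: it makes every such map upper semicontinuous, and every
topology making all these maps upper semicontinuous refines it. -/
theorem lowerTopN_eq_coarsest_usc (X : Type*) [MetricSpace X] :
    (∀ x : X, @UpperSemicontinuous (NClosed X) ℝ (lowerTopN X) _
        (fun F : NClosed X => Metric.infDist x F.1)) ∧
    (∀ t : TopologicalSpace (NClosed X),
      (∀ x : X, @UpperSemicontinuous (NClosed X) ℝ t _
          (fun F : NClosed X => Metric.infDist x F.1)) →
      ∀ S : Set (NClosed X), @IsOpen _ (lowerTopN X) S → @IsOpen _ t S) := by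
  constructor
  · intro x
    letI := lowerTopN X
    rw [upperSemicontinuous_iff_isOpen_preimage]
    intro y
    have h : (fun F : NClosed X => Metric.infDist x F.1) ⁻¹' Set.Iio y
        = (fun F : NClosed X => (⟨F.1, F.2.1⟩ : Closeds X)) ⁻¹'
            {G : Closeds X | ((G : Set X) ∩ Metric.ball x y).Nonempty} := by
      rw [show (fun F : NClosed X => (⟨F.1, F.2.1⟩ : Closeds X)) ⁻¹'
            {G : Closeds X | ((G : Set X) ∩ Metric.ball x y).Nonempty}
          = {F : NClosed X | (F.1 ∩ Metric.ball x y).Nonempty} from rfl, key_ball]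
      rfl
    rw [h]
    exact ⟨_, TopologicalSpace.GenerateOpen.basic _ ⟨_, Metric.isOpen_ball, rfl⟩, rfl⟩
  · intro t ht S hS
    have hle : t ≤ lowerTopN X := by
      rw [lowerTopN, lowerTop, induced_generateFrom_eq]
      apply le_generateFrom
      rintro s ⟨s', ⟨U, hU, rfl⟩, rfl⟩
      have h : (fun F : NClosed X => (⟨F.1, F.2.1⟩ : Closeds X)) ⁻¹'
            {G : Closeds X | ((G : Set X) ∩ U).Nonempty}
          = ⋃ p ∈ {p : X × ℝ | 0 < p.2 ∧ Metric.ball p.1 p.2 ⊆ U},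
              {F : NClosed X | Metric.infDist p.1 F.1 < p.2} := by
        ext F
        simp only [Set.mem_preimage, Set.mem_setOf_eq, Set.mem_iUnion]
        constructor
        · rintro ⟨z, hzF, hzU⟩
          obtain ⟨r, hr, hball⟩ := Metric.isOpen_iff.1 hU z hzU
          refine ⟨(z, r), ⟨hr, hball⟩, ?_⟩
          calc Metric.infDist z F.1 ≤ dist z z := Metric.infDist_le_dist_of_mem hzF
            _ = 0 := dist_self z
            _ < r := hr
        · rintro ⟨⟨x, r⟩, ⟨hr, hball⟩, hd⟩
          obtain ⟨z, hzF, hzd⟩ := (Metric.infDist_lt_iff F.2.2).1 hd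
          exact ⟨z, hzF, hball (by simpa [dist_comm, Metric.mem_ball] using hzd)⟩
      rw [h]
      exact isOpen_biUnion fun p _ => (ht p.1).isOpen_preimage p.2
    exact hle _ hS
end

section
/- Let E be a normed complex vector space and fix x ∈ E. Then the map F ↦ ρ_F(x) is continuous on F((E*)_1) for the Vietoris topology, where (E*)_1 carries the weak-* topology (under which it is compact Hausdorff). -/
open TopologicalSpace Set

/-- Subbasis for the lower topology on closed subsets. -/
def lowerSets (X : Type*) [TopologicalSpace X] : Set (Set (Closeds X)) :=
  {S : Set (Closeds X) |
    ∃ U : Set X, IsOpen U ∧ S = {F : Closeds X | ((F : Set X) ∩ U).Nonempty}}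

/-- Subbasis for the upper Vietoris topology on closed subsets. -/
def upperSets (X : Type*) [TopologicalSpace X] : Set (Set (Closeds X)) :=
  {S : Set (Closeds X) | ∃ U : Set X, IsOpen U ∧ S = {F : Closeds X | (F : Set X) ⊆ U}}

/-- The Vietoris topology: the join of the lower topology and the upper Vietoris topology. -/
def vietTop (X : Type*) [TopologicalSpace X] : TopologicalSpace (Closeds X) :=
  TopologicalSpace.generateFrom (lowerSets X ∪ upperSets X)

variable (E : Type*) [NormedAddCommGroup E] [NormedSpace ℂ E]

/-- The closed unit ball `(E*)_1` of the dual of `E`, inside the dual equipped with the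
weak-* topology. -/
def dualBall : Set (WeakDual ℂ E) := {ω : WeakDual ℂ E | ∀ x : E, ‖ω x‖ ≤ ‖x‖}

/-- For a weak-* closed subset `F` of `(E*)_1`, `ρ_F x = sup_{ω ∈ F} |ω x|`
(with `ρ_∅ x = 0`, which holds by the convention `sSup ∅ = 0` in `ℝ`). -/
noncomputable def rho (F : Closeds (dualBall E)) (x : E) : ℝ :=
  sSup ((fun ω : dualBall E => ‖(ω : WeakDual ℂ E) x‖) '' (F : Set (dualBall E)))

lemma dualBall_eq_polar :
    dualBall E = WeakDual.polar ℂ (Metric.closedBall (0 : E) 1) := by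
  ext ω
  constructor
  · intro hω y hy
    simp only [Metric.mem_closedBall, dist_zero_right] at hy
    exact (hω y).trans hy
  · intro hω y
    rcases eq_or_ne y 0 with rfl | hy0
    · simp
    · have hny : (0 : ℝ) < ‖y‖ := norm_pos_iff.mpr hy0
      have h1 : ((‖y‖ : ℂ)⁻¹ • y) ∈ Metric.closedBall (0 : E) 1 := by
        simp only [Metric.mem_closedBall, dist_zero_right, norm_smul, norm_inv,
          Complex.norm_real, norm_norm]
        rw [inv_mul_cancel₀ hny.ne']
      have h2 : ‖ω ((‖y‖ : ℂ)⁻¹ • y)‖ ≤ 1 := hω _ h1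
      rw [map_smul, smul_eq_mul, norm_mul, norm_inv, Complex.norm_real, norm_norm] at h2
      calc ‖ω y‖ = ‖y‖ * (‖y‖⁻¹ * ‖ω y‖) := by field_simp
      _ ≤ ‖y‖ * 1 := by gcongr
      _ = ‖y‖ := mul_one _

lemma isCompact_dualBall : IsCompact (dualBall E) := by
  rw [dualBall_eq_polar]
  exact WeakDual.isCompact_polar ℂ (Metric.closedBall_mem_nhds 0 one_pos)

instance : CompactSpace (dualBall E) := isCompact_iff_compactSpace.mp (isCompact_dualBall E)

/-- For a fixed `x ∈ E`, the map `F ↦ ρ_F(x)` is continuous on the closed subsets of the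
weak-* compact unit ball `(E*)_1`, endowed with the Vietoris topology. -/
theorem continuous_rho_apply (x : E) :
    @Continuous (Closeds (dualBall E)) ℝ (vietTop (dualBall E)) _
      (fun F : Closeds (dualBall E) => rho E F x) := by
  set f : dualBall E → ℝ := fun ω => ‖(ω : WeakDual ℂ E) x‖ with hf
  have hfc : Continuous f := ((WeakDual.eval_continuous x).comp continuous_subtype_val).norm
  have hbdd : ∀ F : Closeds (dualBall E), BddAbove (f '' (F : Set (dualBall E))) := by
    intro F
    refine ⟨‖x‖, ?_⟩
    rintro r ⟨ω, -, rfl⟩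
    exact ω.2 x
  have hnn : ∀ F : Closeds (dualBall E), 0 ≤ rho E F x := by
    intro F
    apply Real.sSup_nonneg
    rintro r ⟨ω, -, rfl⟩
    exact norm_nonneg _
  letI : TopologicalSpace (Closeds (dualBall E)) := vietTop (dualBall E)
  suffices h : @Continuous (Closeds (dualBall E)) ℝ (vietTop (dualBall E))
      (generateFrom { s | ∃ a, s = Ioi a ∨ s = Iio a })
      (fun F : Closeds (dualBall E) => rho E F x) by
    rwa [← Preorder.topology, ← OrderTopology.topology_eq_generate_intervals] at h
  rw [continuous_generateFrom_iff]
  rintro s ⟨a, rfl | rfl⟩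
  · -- preimage of Ioi a
    rcases lt_or_ge a 0 with ha | ha
    · have : (fun F : Closeds (dualBall E) => rho E F x) ⁻¹' Ioi a = univ := by
        ext F
        simp only [mem_preimage, mem_Ioi, mem_univ, iff_true]
        exact lt_of_lt_of_le ha (hnn F)
      rw [this]
      exact isOpen_univ
    · have : (fun F : Closeds (dualBall E) => rho E F x) ⁻¹' Ioi a
          = {F : Closeds (dualBall E) | ((F : Set (dualBall E)) ∩ (f ⁻¹' Ioi a)).Nonempty} := by
        ext F
        simp only [mem_preimage, mem_Ioi, mem_setOf_eq]
        constructor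
        · intro h
          have hne : (f '' (F : Set (dualBall E))).Nonempty := by
            by_contra hne
            rw [not_nonempty_iff_eq_empty] at hne
            rw [rho, hne, Real.sSup_empty] at h
            exact absurd h (not_lt.mpr ha)
          obtain ⟨r, ⟨ω, hωF, rfl⟩, hr⟩ := exists_lt_of_lt_csSup hne h
          exact ⟨ω, hωF, hr⟩
        · rintro ⟨ω, hωF, hω⟩
          exact lt_of_lt_of_le hω (le_csSup (hbdd F) ⟨ω, hωF, rfl⟩)
      rw [this]
      exact isOpen_generateFrom_of_mem (Or.inl ⟨f ⁻¹' Ioi a, isOpen_Ioi.preimage hfc, rfl⟩)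
  · -- preimage of Iio a
    rcases le_or_gt a 0 with ha | ha
    · have : (fun F : Closeds (dualBall E) => rho E F x) ⁻¹' Iio a = ∅ := by
        ext F
        simp only [mem_preimage, mem_Iio, mem_empty_iff_false, iff_false, not_lt]
        exact ha.trans (hnn F)
      rw [this]
      exact isOpen_empty
    · have : (fun F : Closeds (dualBall E) => rho E F x) ⁻¹' Iio a
          = {F : Closeds (dualBall E) | (F : Set (dualBall E)) ⊆ f ⁻¹' Iio a} := by
        ext F
        simp only [mem_preimage, mem_Iio, mem_setOf_eq]
        constructor
        · intro h ω hωF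
          exact lt_of_le_of_lt (le_csSup (hbdd F) ⟨ω, hωF, rfl⟩) h
        · intro h
          rcases (F : Set (dualBall E)).eq_empty_or_nonempty with he | hne
          · rw [rho, he, image_empty, Real.sSup_empty]; exact ha
          · obtain ⟨ω, hωF, heq⟩ :=
              F.2.isCompact.exists_sSup_image_eq hne hfc.continuousOn
            exact lt_of_eq_of_lt heq (h hωF)
      rw [this]
      exact isOpen_generateFrom_of_mem (Or.inr ⟨f ⁻¹' Iio a, isOpen_Iio.preimage hfc, rfl⟩)
end

section
/- Let E be a normed complex vector space. The set F_conv^bal((E*)_1) of all weak-* closed, convex, balanced subsets of the closed unit ball (E*)_1 of the dual E* is closed in F((E*)_1) for the Vietoris topology; consequently F_conv^bal((E*)_1) is a compact Hausdorff space for the induced Vietoris topology. -/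
open TopologicalSpace Set

section VietGeneral

variable {X : Type*} [TopologicalSpace X]

lemma viet_isOpen_lower {U : Set X} (hU : IsOpen U) :
    @IsOpen _ (vietTop X) {F : Closeds X | ((F : Set X) ∩ U).Nonempty} :=
  @TopologicalSpace.isOpen_generateFrom_of_mem _ _ _ (Or.inl ⟨U, hU, rfl⟩)

lemma viet_isOpen_upper {U : Set X} (hU : IsOpen U) :
    @IsOpen _ (vietTop X) {F : Closeds X | (F : Set X) ⊆ U} :=
  @TopologicalSpace.isOpen_generateFrom_of_mem _ _ _ (Or.inr ⟨U, hU, rfl⟩)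

/-- Vietoris' theorem: if `X` is compact then the hyperspace of closed subsets of `X`
is compact in the Vietoris topology. -/
lemma viet_compactSpace [CompactSpace X] : @CompactSpace (Closeds X) (vietTop X) := by
  letI := vietTop X
  rw [← isCompact_univ_iff, isCompact_iff_ultrafilter_le_nhds]
  intro 𝒰 _
  set L : Set X → Set (Closeds X) := fun U => {G : Closeds X | ((G : Set X) ∩ U).Nonempty}
    with hLdef
  have hF0closed : IsClosed {x : X | ∀ U : Set X, IsOpen U → x ∈ U → L U ∈ 𝒰} := by
    rw [← isOpen_compl_iff, isOpen_iff_forall_mem_open]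
    intro x hx
    simp only [mem_compl_iff, mem_setOf_eq] at hx
    push_neg at hx
    obtain ⟨U, hU, hxU, hnot⟩ := hx
    exact ⟨U, fun y hy hyall => hnot (hyall U hU hy), hU, hxU⟩
  set F0 : Closeds X := ⟨_, hF0closed⟩ with hF0def
  refine ⟨F0, mem_univ _, ?_⟩
  refine le_trans ?_ (nhds_generateFrom (g := lowerSets X ∪ upperSets X) (a := F0)).ge
  rw [le_iInf₂_iff]
  rintro s ⟨hF0s, hs⟩
  rw [Filter.le_principal_iff]
  rcases hs with hlow | hup
  · obtain ⟨U, hU, rfl⟩ := hlow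
    obtain ⟨x, hxF0, hxU⟩ := hF0s
    exact hxF0 U hU hxU
  · obtain ⟨V, hV, rfl⟩ := hup
    by_contra hnmem
    have hsc : {F : Closeds X | (F : Set X) ⊆ V}ᶜ ∈ 𝒰 :=
      Ultrafilter.compl_mem_iff_notMem.mpr hnmem
    -- every point of `Vᶜ` has an open neighborhood `U` with `L U ∉ 𝒰`
    have hpt : ∀ x, x ∈ Vᶜ → ∃ U : Set X, IsOpen U ∧ x ∈ U ∧ L U ∉ 𝒰 := by
      intro x hx
      have hxF0 : ¬ ∀ U : Set X, IsOpen U → x ∈ U → L U ∈ 𝒰 := fun h => hx (hF0s h)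
      push_neg at hxF0
      exact hxF0
    choose U hUopen hxU hUnot using hpt
    have hVc : IsCompact Vᶜ := hV.isClosed_compl.isCompact
    obtain ⟨t, ht⟩ := hVc.elim_nhds_subcover' U
      (fun x hx => (hUopen x hx).mem_nhds (hxU x hx))
    have hbig : ({F : Closeds X | (F : Set X) ⊆ V}ᶜ ∩ ⋂ x ∈ t, (L (U x.1 x.2))ᶜ) ∈ 𝒰 := by
      refine Filter.inter_mem hsc ?_
      rw [Filter.biInter_finset_mem]
      exact fun x _ => Ultrafilter.compl_mem_iff_notMem.mpr (hUnot x.1 x.2)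
    obtain ⟨G, hG1, hG2⟩ := Ultrafilter.nonempty_of_mem hbig
    simp only [mem_compl_iff, mem_setOf_eq] at hG1
    rw [Set.not_subset] at hG1
    obtain ⟨y, hyG, hyV⟩ := hG1
    have hyUnion : y ∈ ⋃ x ∈ t, U x.1 x.2 := ht hyV
    simp only [mem_iUnion] at hyUnion
    obtain ⟨x, hxt, hyU⟩ := hyUnion
    have : G ∈ (L (U x.1 x.2))ᶜ := by
      have := mem_iInter₂.mp hG2 x hxt
      exact this
    exact this ⟨y, hyG, hyU⟩

/-- If `X` is compact Hausdorff then the Vietoris topology on closed subsets is Hausdorff. -/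
lemma viet_t2Space [CompactSpace X] [T2Space X] : @T2Space (Closeds X) (vietTop X) := by
  letI := vietTop X
  have key : ∀ F G : Closeds X, ∀ x : X, x ∈ F → x ∉ G →
      ∃ u v : Set (Closeds X), IsOpen u ∧ IsOpen v ∧ F ∈ u ∧ G ∈ v ∧ Disjoint u v := by
    intro F G x hxF hxG
    obtain ⟨u, v, hu, hv, hxu, hGv, huv⟩ :=
      SeparatedNhds.of_isCompact_isCompact isCompact_singleton G.2.isCompact
        (disjoint_singleton_left.mpr hxG)
    refine ⟨{H : Closeds X | ((H : Set X) ∩ u).Nonempty}, {H : Closeds X | (H : Set X) ⊆ v},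
      viet_isOpen_lower hu, viet_isOpen_upper hv,
      ⟨x, hxF, hxu rfl⟩, hGv, ?_⟩
    rw [Set.disjoint_left]
    rintro H ⟨y, hyH, hyu⟩ hHv
    exact huv.le_bot ⟨hyu, hHv hyH⟩
  refine ⟨fun F G hFG => ?_⟩
  have hne : (F : Set X) ≠ (G : Set X) := fun h => hFG (SetLike.coe_injective h)
  obtain ⟨x, hx⟩ := Set.symmDiff_nonempty.mpr hne
  rcases Set.mem_symmDiff.mp hx with ⟨hxF, hxG⟩ | ⟨hxG, hxF⟩
  · exact key F G x hxF hxG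
  · obtain ⟨u, v, hu, hv, hGu, hFv, huv⟩ := key G F x hxG hxF
    exact ⟨v, u, hv, hu, hFv, hGu, huv.symm⟩

end VietGeneral

variable (E : Type*) [NormedAddCommGroup E] [NormedSpace ℂ E]

/-- The set `F_conv^bal((E*)_1)` of weak-* closed, convex, balanced subsets of `(E*)_1`,
viewed inside the closed subsets of `(E*)_1`. -/
def FconvBal : Set (Closeds (dualBall E)) :=
  {F : Closeds (dualBall E) |
    Convex ℝ (Subtype.val '' (F : Set (dualBall E))) ∧
    Balanced ℂ (Subtype.val '' (F : Set (dualBall E)))}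

/-- `F_conv^bal((E*)_1)` is closed in the Vietoris topology. -/
lemma isClosed_FconvBal : @IsClosed (Closeds (dualBall E)) (vietTop (dualBall E)) (FconvBal E) := by
  letI := vietTop (dualBall E)
  rw [← isOpen_compl_iff, isOpen_iff_forall_mem_open]
  intro F hF
  set S : Set (WeakDual ℂ E) := Subtype.val '' (F : Set (dualBall E)) with hSdef
  have hScomp : IsCompact S := F.2.isCompact.image continuous_subtype_val
  by_cases hconv : Convex ℝ S
  · -- then `S` is not balanced
    have hbal : ¬ Balanced ℂ S := fun h => hF ⟨hconv, h⟩
    simp only [Balanced, not_forall] at hbal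
    obtain ⟨a, ha, hns⟩ := hbal
    rw [Set.not_subset] at hns
    obtain ⟨y, hy, hynot⟩ := hns
    obtain ⟨ω, hωS, rfl⟩ := hy
    obtain ⟨α, hαF, rfl⟩ := hωS
    -- separate the point `a • α` from the compact set `S`
    obtain ⟨u, v, hu, hv, hcu, hSv, huv⟩ :=
      SeparatedNhds.of_isCompact_isCompact isCompact_singleton hScomp
        (disjoint_singleton_left.mpr hynot)
    have hg : Continuous fun p : dualBall E => a • (p : WeakDual ℂ E) :=
      continuous_subtype_val.const_smul a
    set A : Set (dualBall E) := (fun p : dualBall E => a • (p : WeakDual ℂ E)) ⁻¹' u with hAdef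
    have hA : IsOpen A := hu.preimage hg
    have hαA : α ∈ A := by
      simp only [hAdef, mem_preimage]
      exact hcu rfl
    refine ⟨{H : Closeds (dualBall E) | ((H : Set (dualBall E)) ∩ A).Nonempty} ∩
      {H : Closeds (dualBall E) | (H : Set (dualBall E)) ⊆ Subtype.val ⁻¹' v}, ?_, ?_, ?_⟩
    · rintro G ⟨⟨β, hβG, hβA⟩, hGv⟩ hGmem
      have hβS : (β : WeakDual ℂ E) ∈ Subtype.val '' (G : Set (dualBall E)) := ⟨β, hβG, rfl⟩
      have : a • (β : WeakDual ℂ E) ∈ Subtype.val '' (G : Set (dualBall E)) :=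
        hGmem.2 a ha (Set.smul_mem_smul_set hβS)
      obtain ⟨γ, hγG, hγ⟩ := this
      have h1 : a • (β : WeakDual ℂ E) ∈ v := hγ ▸ (hGv hγG)
      have h2 : a • (β : WeakDual ℂ E) ∈ u := hβA
      exact huv.le_bot ⟨h2, h1⟩
    · exact IsOpen.inter (viet_isOpen_lower hA)
        (viet_isOpen_upper (hv.preimage continuous_subtype_val))
    · exact ⟨⟨α, hαF, hαA⟩, fun p hp => hSv ⟨p, hp, rfl⟩⟩
  · -- `S` is not convex
    simp only [Convex, StarConvex, not_forall] at hconv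
    obtain ⟨x, hxS, y, hyS, ta, tb, hta, htb, hab, hnot⟩ := hconv
    obtain ⟨α, hαF, rfl⟩ := hxS
    obtain ⟨β, hβF, rfl⟩ := hyS
    obtain ⟨u, v, hu, hv, hcu, hSv, huv⟩ :=
      SeparatedNhds.of_isCompact_isCompact isCompact_singleton hScomp
        (disjoint_singleton_left.mpr hnot)
    have hR : ∀ c : ℝ, Continuous fun x : WeakDual ℂ E => c • x := by
      intro c
      have := continuous_const_smul (T := WeakDual ℂ E) (c : ℂ)
      convert this using 2 with x
      exact (Complex.coe_smul c x).symm
    have hf : Continuous fun p : dualBall E × dualBall E =>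
        ta • (p.1 : WeakDual ℂ E) + tb • (p.2 : WeakDual ℂ E) :=
      ((hR ta).comp (continuous_subtype_val.comp continuous_fst)).add
        ((hR tb).comp (continuous_subtype_val.comp continuous_snd))
    have hpre : IsOpen ((fun p : dualBall E × dualBall E =>
        ta • (p.1 : WeakDual ℂ E) + tb • (p.2 : WeakDual ℂ E)) ⁻¹' u) := hu.preimage hf
    have hmem : (α, β) ∈ ((fun p : dualBall E × dualBall E =>
        ta • (p.1 : WeakDual ℂ E) + tb • (p.2 : WeakDual ℂ E)) ⁻¹' u) := by
      simp only [mem_preimage]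
      exact hcu rfl
    obtain ⟨A, B, hA, hB, hαA, hβB, hAB⟩ := isOpen_prod_iff.mp hpre α β hmem
    refine ⟨{H : Closeds (dualBall E) | ((H : Set (dualBall E)) ∩ A).Nonempty} ∩
      ({H : Closeds (dualBall E) | ((H : Set (dualBall E)) ∩ B).Nonempty} ∩
      {H : Closeds (dualBall E) | (H : Set (dualBall E)) ⊆ Subtype.val ⁻¹' v}), ?_, ?_, ?_⟩
    · rintro G ⟨⟨α', hα'G, hα'A⟩, ⟨β', hβ'G, hβ'B⟩, hGv⟩ hGmem
      have hcomb : ta • (α' : WeakDual ℂ E) + tb • (β' : WeakDual ℂ E) ∈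
          Subtype.val '' (G : Set (dualBall E)) :=
        hGmem.1 ⟨α', hα'G, rfl⟩ ⟨β', hβ'G, rfl⟩ hta htb hab
      obtain ⟨γ, hγG, hγ⟩ := hcomb
      have h1 : ta • (α' : WeakDual ℂ E) + tb • (β' : WeakDual ℂ E) ∈ v := hγ ▸ (hGv hγG)
      have h2 : ta • (α' : WeakDual ℂ E) + tb • (β' : WeakDual ℂ E) ∈ u :=
        hAB (Set.mk_mem_prod hα'A hβ'B)
      exact huv.le_bot ⟨h2, h1⟩
    · exact IsOpen.inter (viet_isOpen_lower hA) (IsOpen.inter (viet_isOpen_lower hB)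
        (viet_isOpen_upper (hv.preimage continuous_subtype_val)))
    · exact ⟨⟨α, hαF, hαA⟩, ⟨β, hβF, hβB⟩, fun p hp => hSv ⟨p, hp, rfl⟩⟩

/-- `F_conv^bal((E*)_1)` is closed in `F((E*)_1)` for the Vietoris topology; consequently it is
a compact Hausdorff space for the induced Vietoris topology. -/
theorem isClosed_and_compactSpace_and_t2Space_FconvBal :
    @IsClosed (Closeds (dualBall E)) (vietTop (dualBall E)) (FconvBal E) ∧
    @CompactSpace (FconvBal E) (TopologicalSpace.induced Subtype.val (vietTop (dualBall E))) ∧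
    @T2Space (FconvBal E) (TopologicalSpace.induced Subtype.val (vietTop (dualBall E))) := by
  have hclosed := isClosed_FconvBal E
  refine ⟨hclosed, ?_, ?_⟩
  · letI := vietTop (dualBall E)
    haveI := viet_compactSpace (X := dualBall E)
    exact isCompact_iff_compactSpace.mp hclosed.isCompact
  · letI := vietTop (dualBall E)
    haveI := viet_t2Space (X := dualBall E)
    exact inferInstance
end

section
/- Let E be a normed complex vector space, let (V_i)_{i ∈ I} be a net of weak-* closed linear subspaces of E*, and let V be a weak-* closed linear subspace of E*. Then the following are equivalent: (i) the closed unit balls (V_i)_1 converge to (V)_1 in the Vietoris topology on closed subsets of (E*)_1; (ii) for every x ∈ E, sup_{ω ∈ (V_i)_1} |ω(x)| converges to sup_{ω ∈ (V)_1} |ω(x)|. -/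
open TopologicalSpace Set Filter

variable (E : Type*) [NormedAddCommGroup E] [NormedSpace ℂ E]

/-- The closed unit ball `(V)_1 = V ∩ (E*)_1` of a weak-* closed subspace `V` of `E*`, as a
closed subset of `(E*)_1`. -/
def unitBallCloseds (V : Submodule ℂ (WeakDual ℂ E))
    (hV : IsClosed (V : Set (WeakDual ℂ E))) : Closeds (dualBall E) :=
  ⟨Subtype.val ⁻¹' (V : Set (WeakDual ℂ E)), hV.preimage continuous_subtype_val⟩

/-- `sup_{ω ∈ (V)_1} |ω x|`, i.e. the norm of `⟨·, x⟩` restricted to `V`. -/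
noncomputable def ballSup (V : Submodule ℂ (WeakDual ℂ E)) (x : E) : ℝ :=
  sSup ((fun ω : WeakDual ℂ E => ‖ω x‖) '' ((V : Set (WeakDual ℂ E)) ∩ dualBall E))

namespace VietAux

variable {E}

lemma zero_apply (x : E) : (0 : WeakDual ℂ E) x = 0 := rfl

lemma zero_mem_ball : (0 : WeakDual ℂ E) ∈ dualBall E := fun x => by
  simp [zero_apply]

lemma ballSet_nonempty (V : Submodule ℂ (WeakDual ℂ E)) :
    ((V : Set (WeakDual ℂ E)) ∩ dualBall E).Nonempty := ⟨0, V.zero_mem, zero_mem_ball⟩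

lemma bddAbove_img (V : Submodule ℂ (WeakDual ℂ E)) (x : E) :
    BddAbove ((fun ω : WeakDual ℂ E => ‖ω x‖) '' ((V : Set (WeakDual ℂ E)) ∩ dualBall E)) :=
  ⟨‖x‖, by rintro r ⟨φ, ⟨-, hφ⟩, rfl⟩; exact hφ x⟩

lemma le_ballSup {V : Submodule ℂ (WeakDual ℂ E)} {φ : WeakDual ℂ E}
    (hφ : φ ∈ (V : Set (WeakDual ℂ E)) ∩ dualBall E) (x : E) :
    ‖φ x‖ ≤ ballSup E V x := le_csSup (bddAbove_img V x) ⟨φ, hφ, rfl⟩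

lemma ballSup_le {V : Submodule ℂ (WeakDual ℂ E)} {x : E} {a : ℝ}
    (h : ∀ φ ∈ (V : Set (WeakDual ℂ E)) ∩ dualBall E, ‖φ x‖ ≤ a) : ballSup E V x ≤ a :=
  csSup_le ((ballSet_nonempty V).image _) (by rintro r ⟨φ, hφ, rfl⟩; exact h φ hφ)

lemma ballSup_nonneg (V : Submodule ℂ (WeakDual ℂ E)) (x : E) : 0 ≤ ballSup E V x := by
  have := le_ballSup (V := V) ⟨V.zero_mem, zero_mem_ball⟩ x
  simpa [zero_apply] using this

lemma exists_lt_ballSup {V : Submodule ℂ (WeakDual ℂ E)} {x : E} {b : ℝ}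
    (hb : b < ballSup E V x) :
    ∃ φ ∈ (V : Set (WeakDual ℂ E)) ∩ dualBall E, b < ‖φ x‖ := by
  obtain ⟨r, ⟨φ, hφ, rfl⟩, h⟩ := exists_lt_of_lt_csSup ((ballSet_nonempty V).image _) hb
  exact ⟨φ, hφ, h⟩

lemma abs_ballSup_sub (V : Submodule ℂ (WeakDual ℂ E)) (x y : E) :
    |ballSup E V x - ballSup E V y| ≤ ‖x - y‖ := by
  have key : ∀ u v : E, ballSup E V u - ballSup E V v ≤ ‖u - v‖ := by
    intro u v
    rw [sub_le_iff_le_add]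
    refine ballSup_le fun φ hφ => ?_
    have : φ u = φ v + φ (u - v) := by rw [← map_add]; congr 1; abel
    calc ‖φ u‖ ≤ ‖φ v‖ + ‖φ (u - v)‖ := by rw [this]; exact norm_add_le _ _
      _ ≤ ‖u - v‖ + ballSup E V v := by
          have h1 := le_ballSup hφ v
          have h2 := hφ.2 (u - v)
          linarith
  rw [abs_sub_le_iff]
  refine ⟨key x y, ?_⟩
  have := key y x
  rwa [norm_sub_rev] at this

lemma ballSup_eq_zero {V : Submodule ℂ (WeakDual ℂ E)} {x : E}
    (h : ∀ φ ∈ V, φ x = 0) : ballSup E V x = 0 :=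
  le_antisymm (ballSup_le fun φ hφ => by rw [h φ hφ.1]; simp) (ballSup_nonneg _ _)

lemma isClosed_dualBall : IsClosed (dualBall E) := by
  have : dualBall E = ⋂ x : E, {ω : WeakDual ℂ E | ‖ω x‖ ≤ ‖x‖} := by
    ext ω; simp [dualBall, mem_iInter]
  rw [this]
  exact isClosed_iInter fun x =>
    isClosed_le ((WeakDual.eval_continuous x).norm) continuous_const

lemma isCompact_dualBall : IsCompact (dualBall E) := by
  have : dualBall E = ⇑(WeakDual.toStrongDual : WeakDual ℂ E ≃ₗ[ℂ] StrongDual ℂ E) ⁻¹' Metric.closedBall 0 1 := by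
    ext ω
    simp only [dualBall, mem_setOf_eq, mem_preimage, Metric.mem_closedBall, dist_zero_right]
    rw [ContinuousLinearMap.opNorm_le_iff zero_le_one]
    simp [one_mul]
  rw [this]
  exact WeakDual.isCompact_closedBall (𝕜 := ℂ) (E := E) 0 1

lemma exists_finset_ball_subset (ω : WeakDual ℂ E) {N : Set (WeakDual ℂ E)}
    (hN : N ∈ nhds ω) :
    ∃ (t : Finset E) (ε : ℝ), 0 < ε ∧
      {φ : WeakDual ℂ E | ∀ x ∈ t, ‖φ x - ω x‖ < ε} ⊆ N := by
  have h0 : N ∈ comap (fun (φ : WeakDual ℂ E) (x : E) => φ x) (nhds (fun x => ω x)) := by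
    rw [← nhds_induced]; exact hN
  obtain ⟨t, ht, hsub⟩ := h0
  rw [nhds_pi, Filter.mem_pi] at ht
  obtain ⟨I, hIfin, v, hv, hpi⟩ := ht
  have hδ : ∀ x : E, ∃ δ : ℝ, 0 < δ ∧ Metric.ball (ω x) δ ⊆ v x := fun x =>
    Metric.mem_nhds_iff.mp (hv x)
  choose δ hδpos hδball using hδ
  classical
  refine ⟨hIfin.toFinset, if h : hIfin.toFinset.Nonempty then hIfin.toFinset.inf' h δ else 1,
    ?_, ?_⟩
  · split_ifs with h
    · exact (Finset.lt_inf'_iff h).mpr fun x _ => hδpos x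
    · exact one_pos
  · intro φ hφ
    apply hsub
    apply hpi
    intro x hxI
    have hxt : x ∈ hIfin.toFinset := hIfin.mem_toFinset.mpr hxI
    have hne : hIfin.toFinset.Nonempty := ⟨x, hxt⟩
    have hlt : ‖φ x - ω x‖ < δ x := by
      have := hφ x hxt
      rw [dif_pos hne] at this
      exact lt_of_lt_of_le this (Finset.inf'_le δ hxt)
    exact hδball x (by rwa [Metric.mem_ball, dist_eq_norm])


lemma exists_annihilating (W : Submodule ℂ (WeakDual ℂ E))
    (hW : IsClosed (W : Set (WeakDual ℂ E))) {ω : WeakDual ℂ E} (hω : ω ∉ W) :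
    ∃ x : E, (∀ φ ∈ W, φ x = 0) ∧ ω x ≠ 0 := by
  have hN : (W : Set (WeakDual ℂ E))ᶜ ∈ nhds ω := hW.isOpen_compl.mem_nhds hω
  obtain ⟨t, ε, hε, hsub⟩ := exists_finset_ball_subset ω hN
  classical
  let T : WeakDual ℂ E →ₗ[ℂ] (↥t → ℂ) :=
    { toFun := fun φ => fun x => φ (x : E)
      map_add' := fun φ ψ => rfl
      map_smul' := fun c φ => rfl }
  set L := W.map T with hL
  have hz : T ω ∉ L := by
    rintro ⟨φ, hφW, hφz⟩
    have hmem : φ ∈ (W : Set (WeakDual ℂ E))ᶜ := hsub fun x hx => by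
      have : φ x = ω x := congrFun hφz ⟨x, hx⟩
      simp [this, hε]
    exact hmem hφW
  have hzq : L.mkQ (T ω) ≠ 0 := by
    simpa [Submodule.Quotient.mk_eq_zero] using hz
  obtain ⟨f, hf⟩ : ∃ f : Module.Dual ℂ ((↥t → ℂ) ⧸ L), f (L.mkQ (T ω)) ≠ 0 := by
    by_contra h
    push_neg at h
    exact hzq ((Module.forall_dual_apply_eq_zero_iff ℂ _).mp h)
  set g : Module.Dual ℂ (↥t → ℂ) := f.comp L.mkQ with hg
  have hgL : ∀ w ∈ L, g w = 0 := fun w hw => by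
    simp only [hg, LinearMap.comp_apply]
    rw [show L.mkQ w = 0 from (Submodule.Quotient.mk_eq_zero L).mpr hw, map_zero]
  let e : ↥t → (↥t → ℂ) := fun i => fun j => if i = j then 1 else 0
  have hgT : ∀ φ : WeakDual ℂ E, g (T φ) = ∑ i : ↥t, φ (i : E) * g (e i) := by
    intro φ
    have hrep : T φ = ∑ i : ↥t, (T φ i) • e i := pi_eq_sum_univ (T φ)
    rw [hrep, map_sum]
    simp only [map_smul, smul_eq_mul]
    rfl
  refine ⟨∑ i : ↥t, g (e i) • (i : E), ?_, ?_⟩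
  · intro φ hφ
    have : φ (∑ i : ↥t, g (e i) • (i : E)) = ∑ i : ↥t, g (e i) * φ (i : E) := by
      rw [map_sum]; simp
    rw [this]
    have := hgT φ
    have hTφ : g (T φ) = 0 := hgL _ ⟨φ, hφ, rfl⟩
    rw [hTφ] at this
    rw [Finset.sum_congr rfl fun i _ => mul_comm (g (e i)) (φ (i : E))]
    exact this.symm
  · have : ω (∑ i : ↥t, g (e i) • (i : E)) = ∑ i : ↥t, g (e i) * ω (i : E) := by
      rw [map_sum]; simp
    rw [this]
    rw [Finset.sum_congr rfl fun i _ => mul_comm (g (e i)) (ω (i : E))]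
    rw [← hgT ω]
    exact hf


section KeyLower

variable {ι : Type*} [Preorder ι] [IsDirected ι (· ≤ ·)] [Nonempty ι]

lemma key_lower (V : ι → Submodule ℂ (WeakDual ℂ E))
    (hV : ∀ i, IsClosed ((V i : Set (WeakDual ℂ E))))
    (W : Submodule ℂ (WeakDual ℂ E))
    (h : ∀ x : E, Tendsto (fun i => ballSup E (V i) x) atTop (nhds (ballSup E W x)))
    {ω : WeakDual ℂ E} (hωW : ω ∈ W) (hωB : ω ∈ dualBall E)
    (s : Finset E) {ε : ℝ} (hε : 0 < ε) :
    ∀ᶠ i in atTop, ∃ φ ∈ (V i : Set (WeakDual ℂ E)) ∩ dualBall E,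
      ∀ x ∈ s, ‖φ x - ω x‖ < ε := by
  classical
  set H := EuclideanSpace ℂ ↥s with hH
  letI : InnerProductSpace ℝ H := InnerProductSpace.complexToReal
  set Tm : WeakDual ℂ E → H :=
    fun φ => (WithLp.equiv 2 (↥s → ℂ)).symm (fun x => φ (x : E)) with hTm
  have hTmcont : Continuous Tm :=
    (PiLp.continuous_toLp 2 (fun _ : ↥s => ℂ)).comp
      (continuous_pi fun x => WeakDual.eval_continuous (x : E))
  have hTco : ∀ (φ : WeakDual ℂ E) (x : ↥s), Tm φ x = φ (x : E) := fun φ x => rfl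
  set xc : H → E := fun c => ∑ x : ↥s, (starRingEnd ℂ) (c x) • (x : E) with hxc
  have hφxc : ∀ (φ : WeakDual ℂ E) (c : H), φ (xc c) = (inner ℂ c (Tm φ) : ℂ) := by
    intro φ c
    rw [hxc]
    simp only [map_sum, map_smul, smul_eq_mul]
    rw [PiLp.inner_apply]
    refine Finset.sum_congr rfl fun x _ => ?_
    rw [RCLike.inner_apply, hTco, mul_comm]
  -- coordinate bound
  have hcoord : ∀ (w : H) (x : ↥s), ‖w x‖ ≤ ‖w‖ := by
    intro w x
    rw [EuclideanSpace.norm_eq]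
    rw [show ‖w x‖ = Real.sqrt (‖w x‖ ^ 2) from (Real.sqrt_sq (norm_nonneg _)).symm]
    apply Real.sqrt_le_sqrt
    exact Finset.single_le_sum (f := fun y : ↥s => ‖w y‖ ^ 2)
      (fun y _ => by positivity) (Finset.mem_univ x)
  set R₀ : ℝ := Real.sqrt (∑ x : ↥s, ‖(x : E)‖ ^ 2) with hR₀
  have hR₀0 : 0 ≤ R₀ := Real.sqrt_nonneg _
  have hTnorm : ∀ φ ∈ dualBall E, ‖Tm φ‖ ≤ R₀ := by
    intro φ hφ
    rw [EuclideanSpace.norm_eq, hR₀]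
    apply Real.sqrt_le_sqrt
    refine Finset.sum_le_sum fun x _ => ?_
    rw [hTco]
    have := hφ (x : E)
    exact pow_le_pow_left₀ (norm_nonneg _) this 2
  set L : ℝ := ∑ x : ↥s, ‖(x : E)‖ with hLdef
  have hL0 : 0 ≤ L := Finset.sum_nonneg fun x _ => norm_nonneg _
  have hxcLip : ∀ c c' : H, ‖xc c - xc c'‖ ≤ L * ‖c - c'‖ := by
    intro c c'
    rw [hxc]
    rw [← Finset.sum_sub_distrib]
    calc ‖∑ x : ↥s, ((starRingEnd ℂ) (c x) • (x : E) - (starRingEnd ℂ) (c' x) • (x : E))‖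
        ≤ ∑ x : ↥s, ‖(starRingEnd ℂ) (c x) • (x : E) - (starRingEnd ℂ) (c' x) • (x : E)‖ :=
          norm_sum_le _ _
      _ ≤ ∑ x : ↥s, ‖c - c'‖ * ‖(x : E)‖ := by
          refine Finset.sum_le_sum fun x _ => ?_
          rw [← sub_smul, norm_smul]
          have h1 : ‖(starRingEnd ℂ) (c x) - (starRingEnd ℂ) (c' x)‖ = ‖c x - c' x‖ := by
            rw [← map_sub]; exact RCLike.norm_conj _
          rw [h1]
          have h2 : ‖c x - c' x‖ ≤ ‖c - c'‖ := by
            have := hcoord (c - c') x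
            exact this
          exact mul_le_mul_of_nonneg_right h2 (norm_nonneg _)
      _ = L * ‖c - c'‖ := by rw [← Finset.mul_sum, mul_comm]
  -- uniform convergence on bounded sets
  have key_unif : ∀ η : ℝ, 0 < η → ∀ R : ℝ, ∀ᶠ i in atTop, ∀ c : H, ‖c‖ ≤ R →
      ballSup E W (xc c) - ballSup E (V i) (xc c) < η := by
    intro η hη R
    set δ : ℝ := η / (4 * (L + 1)) with hδdef
    have hδ0 : 0 < δ := by positivity
    have hLδ : L * δ ≤ η / 4 := by
      have h41 : (0 : ℝ) < 4 * (L + 1) := by positivity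
      rw [hδdef, ← mul_div_assoc, div_le_div_iff₀ h41 (by norm_num : (0:ℝ) < 4)]
      nlinarith [mul_nonneg hL0 hη.le]
    obtain ⟨net, hnetfin, hnet⟩ :=
      Metric.totallyBounded_iff.mp (isCompact_closedBall (0 : H) R).totallyBounded δ hδ0
    have hptwise : ∀ y ∈ net, ∀ᶠ i in atTop,
        |ballSup E (V i) (xc y) - ballSup E W (xc y)| < η / 4 := by
      intro y _
      have := Metric.tendsto_nhds.mp (h (xc y)) (η / 4) (by positivity)
      filter_upwards [this] with i hi
      rwa [Real.dist_eq] at hi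
    have hall := (eventually_all_finite hnetfin).mpr hptwise
    filter_upwards [hall] with i hi c hc
    have hcball : c ∈ Metric.closedBall (0 : H) R := by
      rw [Metric.mem_closedBall, dist_zero_right]; exact hc
    obtain ⟨y, hy, hcy⟩ := mem_iUnion₂.mp (hnet hcball)
    rw [Metric.mem_ball, dist_eq_norm] at hcy
    have hiy := hi y hy
    have l1 : |ballSup E W (xc c) - ballSup E W (xc y)| ≤ L * ‖c - y‖ :=
      le_trans (abs_ballSup_sub W (xc c) (xc y)) (hxcLip c y)
    have l2 : |ballSup E (V i) (xc y) - ballSup E (V i) (xc c)| ≤ L * ‖c - y‖ :=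
      le_trans (abs_ballSup_sub (V i) (xc y) (xc c)) (by rw [norm_sub_rev]; exact hxcLip c y)
    have hLcy : L * ‖c - y‖ ≤ η / 4 := by
      calc L * ‖c - y‖ ≤ L * δ := mul_le_mul_of_nonneg_left hcy.le hL0
        _ ≤ η / 4 := hLδ
    rw [abs_sub_lt_iff] at hiy
    rw [abs_sub_le_iff] at l1 l2
    linarith [l1.1, l2.1, hiy.2]
  -- main step: eventually there is a close element
  have main : ∀ᶠ i in atTop, ∃ φ ∈ (V i : Set (WeakDual ℂ E)) ∩ dualBall E,
      ‖Tm φ - Tm ω‖ < ε := by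
    filter_upwards [key_unif (ε ^ 2) (by positivity) (2 * R₀)] with i hi
    by_contra hcon
    push_neg at hcon
    set B : Set (WeakDual ℂ E) := (V i : Set (WeakDual ℂ E)) ∩ dualBall E with hB
    set K : Set H := Tm '' B with hK
    set z : H := Tm ω with hz
    have hBc : IsCompact B :=
      isCompact_dualBall.of_isClosed_subset ((hV i).inter isClosed_dualBall)
        inter_subset_right
    have hKc : IsCompact K := hBc.image hTmcont
    have h0B : (0 : WeakDual ℂ E) ∈ B := ⟨(V i).zero_mem, zero_mem_ball⟩
    have hKne : K.Nonempty := ⟨Tm 0, 0, h0B, rfl⟩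
    have hKconv : Convex ℝ K := by
      rintro w₁ ⟨φ₁, hφ₁, rfl⟩ w₂ ⟨φ₂, hφ₂, rfl⟩ a b ha hb hab
      refine ⟨(a : ℂ) • φ₁ + (b : ℂ) • φ₂, ⟨?_, ?_⟩, ?_⟩
      · exact (V i).add_mem ((V i).smul_mem _ hφ₁.1) ((V i).smul_mem _ hφ₂.1)
      · intro x
        have : ((a : ℂ) • φ₁ + (b : ℂ) • φ₂) x = (a : ℂ) * φ₁ x + (b : ℂ) * φ₂ x := rfl
        rw [this]
        calc ‖(a : ℂ) * φ₁ x + (b : ℂ) * φ₂ x‖ ≤ ‖(a : ℂ) * φ₁ x‖ + ‖(b : ℂ) * φ₂ x‖ :=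
              norm_add_le _ _
          _ ≤ a * ‖x‖ + b * ‖x‖ := by
              rw [norm_mul, norm_mul, Complex.norm_real, Complex.norm_real,
                Real.norm_of_nonneg ha, Real.norm_of_nonneg hb]
              exact add_le_add (mul_le_mul_of_nonneg_left (hφ₁.2 x) ha)
                (mul_le_mul_of_nonneg_left (hφ₂.2 x) hb)
          _ = ‖x‖ := by rw [← add_mul, hab, one_mul]
      · refine PiLp.ext fun x => ?_
        show ((a : ℂ) • φ₁ + (b : ℂ) • φ₂) (x : E) = (a • Tm φ₁ + b • Tm φ₂) x
        have h1 : ((a : ℂ) • φ₁ + (b : ℂ) • φ₂) (x : E) = (a : ℂ) * φ₁ x + (b : ℂ) * φ₂ x := rfl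
        have h2 : (a • Tm φ₁ + b • Tm φ₂) x = a • (φ₁ (x : E)) + b • (φ₂ (x : E)) := rfl
        rw [h1, h2, Complex.real_smul, Complex.real_smul]
    obtain ⟨u, huK, humin⟩ :=
      exists_norm_eq_iInf_of_complete_convex hKne hKc.isComplete hKconv z
    have hproj : ∀ w ∈ K, (inner ℝ (z - u) (w - u) : ℝ) ≤ 0 :=
      (norm_eq_iInf_iff_real_inner_le_zero hKconv huK).mp humin
    set c : H := z - u with hc
    have hεc : ε ≤ ‖c‖ := by
      obtain ⟨φu, hφu, rfl⟩ := huK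
      have := hcon φu hφu
      rwa [norm_sub_rev] at this
    have hprod : ∀ w ∈ K, (inner ℝ c w : ℝ) ≤ (inner ℝ c z : ℝ) - ‖c‖ ^ 2 := by
      intro w hw
      have h1 := hproj w hw
      rw [inner_sub_right] at h1
      have h2 : (inner ℝ c u : ℝ) = (inner ℝ c z : ℝ) - ‖c‖ ^ 2 := by
        have : u = z - c := by rw [hc]; abel
        rw [this, inner_sub_right, real_inner_self_eq_norm_sq]
      linarith
    have hrealz : (inner ℝ c z : ℝ) ≤ ballSup E W (xc c) := by
      have h1 : (inner ℝ c z : ℝ) = RCLike.re (inner ℂ c (Tm ω) : ℂ) := rfl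
      rw [h1, ← hφxc ω c]
      exact le_trans (RCLike.re_le_norm _) (le_ballSup ⟨hωW, hωB⟩ _)
    have hsup_i : ballSup E (V i) (xc c) ≤ (inner ℝ c z : ℝ) - ‖c‖ ^ 2 := by
      refine ballSup_le fun φ hφ => ?_
      set a : ℂ := φ (xc c) with ha
      by_cases h0 : a = 0
      · rw [h0, norm_zero]
        have := hprod (Tm 0) ⟨0, h0B, rfl⟩
        have hTm0 : Tm (0 : WeakDual ℂ E) = 0 := rfl
        rw [hTm0, inner_zero_right] at this
        linarith
      · set lam : ℂ := (‖a‖ : ℂ) / a with hlam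
        have hlamnorm : ‖lam‖ = 1 := by
          rw [hlam, norm_div, Complex.norm_real, norm_norm,
            div_self (norm_ne_zero_iff.mpr h0)]
        have hmem : lam • φ ∈ B := by
          refine ⟨(V i).smul_mem _ hφ.1, fun x => ?_⟩
          have : (lam • φ) x = lam * φ x := rfl
          rw [this, norm_mul, hlamnorm, one_mul]
          exact hφ.2 x
        have hval : ((inner ℂ c (Tm (lam • φ)) : ℂ)) = lam * a := by
          rw [← hφxc (lam • φ) c]
          rfl
        have hlama : lam * a = (‖a‖ : ℂ) := by
          rw [hlam, div_mul_cancel₀ _ h0]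
        have := hprod (Tm (lam • φ)) ⟨lam • φ, hmem, rfl⟩
        have h2 : (inner ℝ c (Tm (lam • φ)) : ℝ) = ‖a‖ := by
          have h3 : (inner ℝ c (Tm (lam • φ)) : ℝ) = RCLike.re ((inner ℂ c (Tm (lam • φ))) : ℂ) :=
            rfl
          rw [h3, hval, hlama]
          simp
        rw [h2] at this
        exact this
    have hcR : ‖c‖ ≤ 2 * R₀ := by
      obtain ⟨φu, hφu, hTφu⟩ := huK
      calc ‖c‖ = ‖z - u‖ := rfl
        _ ≤ ‖z‖ + ‖u‖ := norm_sub_le _ _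
        _ ≤ R₀ + R₀ := add_le_add (hTnorm ω hωB) (hTφu ▸ hTnorm φu hφu.2)
        _ = 2 * R₀ := by ring
    have hfinal := hi c hcR
    have hsq : ε ^ 2 ≤ ‖c‖ ^ 2 := pow_le_pow_left₀ hε.le hεc 2
    linarith
  filter_upwards [main] with i hmi
  obtain ⟨φ, hφ, hlt⟩ := hmi
  refine ⟨φ, hφ, fun x hx => ?_⟩
  have : ‖φ x - ω x‖ = ‖(Tm φ - Tm ω) ⟨x, hx⟩‖ := rfl
  rw [this]
  exact lt_of_le_of_lt (hcoord _ _) hlt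

end KeyLower


end VietAux

open VietAux

/-- For a net `(V_i)` of weak-* closed subspaces of `E*` and a weak-* closed subspace `V`,
the unit balls `(V_i)_1` converge to `(V)_1` in the Vietoris topology iff for every `x ∈ E`,
`sup_{ω ∈ (V_i)_1} |ω x| → sup_{ω ∈ (V)_1} |ω x|`. -/
theorem tendsto_vietoris_iff_tendsto_sup
    {ι : Type*} [Preorder ι] [IsDirected ι (· ≤ ·)] [Nonempty ι]
    (V : ι → Submodule ℂ (WeakDual ℂ E))
    (hV : ∀ i, IsClosed ((V i : Set (WeakDual ℂ E))))
    (W : Submodule ℂ (WeakDual ℂ E)) (hW : IsClosed (W : Set (WeakDual ℂ E))) :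
    Tendsto (fun i => unitBallCloseds E (V i) (hV i)) atTop
        (@nhds _ (vietTop (dualBall E)) (unitBallCloseds E W hW)) ↔
      ∀ x : E, Tendsto (fun i => ballSup E (V i) x) atTop (nhds (ballSup E W x)) := by
  letI : TopologicalSpace (Closeds ↥(dualBall E)) := vietTop (dualBall E)
  have hFmem : ∀ (Vs : Submodule ℂ (WeakDual ℂ E)) (hVs : IsClosed (Vs : Set (WeakDual ℂ E)))
      (σ : ↥(dualBall E)), σ ∈ (unitBallCloseds E Vs hVs : Set ↥(dualBall E)) ↔
        (σ : WeakDual ℂ E) ∈ Vs := fun Vs hVs σ => Iff.rfl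
  constructor
  · -- Vietoris convergence implies convergence of sups
    intro hT x
    rw [Metric.tendsto_nhds]
    intro ε hε
    set p : ℝ := ballSup E W x with hp
    have hεh : 0 < ε / 2 := by linarith
    -- upper estimate
    have hupper : ∀ᶠ i in atTop, ballSup E (V i) x < p + ε := by
      set U : Set ↥(dualBall E) :=
        {η : ↥(dualBall E) | ‖(η : WeakDual ℂ E) x‖ < p + ε / 2} with hU
      have hUopen : IsOpen U :=
        isOpen_lt (((WeakDual.eval_continuous x).comp continuous_subtype_val).norm)
          continuous_const
      have hSopen : IsOpen {F : Closeds ↥(dualBall E) | (F : Set ↥(dualBall E)) ⊆ U} :=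
        TopologicalSpace.isOpen_generateFrom_of_mem (Or.inr ⟨U, hUopen, rfl⟩)
      have hSmem : unitBallCloseds E W hW ∈
          {F : Closeds ↥(dualBall E) | (F : Set ↥(dualBall E)) ⊆ U} := by
        intro σ hσ
        have h1 : ‖(σ : WeakDual ℂ E) x‖ ≤ p := le_ballSup ⟨(hFmem W hW σ).mp hσ, σ.2⟩ x
        show ‖(σ : WeakDual ℂ E) x‖ < p + ε / 2
        linarith
      filter_upwards [hT.eventually (hSopen.mem_nhds hSmem)] with i hi
      have : ballSup E (V i) x ≤ p + ε / 2 := by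
        refine ballSup_le fun φ hφ => ?_
        have := hi ((hFmem (V i) (hV i) ⟨φ, hφ.2⟩).mpr hφ.1)
        exact le_of_lt this
      linarith
    -- lower estimate
    have hlower : ∀ᶠ i in atTop, p - ε < ballSup E (V i) x := by
      have hblt : p - ε / 2 < ballSup E W x := by rw [← hp]; linarith
      obtain ⟨φ₀, hφ₀, hφ₀x⟩ := exists_lt_ballSup hblt
      set U : Set ↥(dualBall E) :=
        {η : ↥(dualBall E) | p - ε / 2 < ‖(η : WeakDual ℂ E) x‖} with hU
      have hUopen : IsOpen U :=
        isOpen_lt continuous_const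
          (((WeakDual.eval_continuous x).comp continuous_subtype_val).norm)
      have hSopen : IsOpen
          {F : Closeds ↥(dualBall E) | ((F : Set ↥(dualBall E)) ∩ U).Nonempty} :=
        TopologicalSpace.isOpen_generateFrom_of_mem (Or.inl ⟨U, hUopen, rfl⟩)
      have hSmem : unitBallCloseds E W hW ∈
          {F : Closeds ↥(dualBall E) | ((F : Set ↥(dualBall E)) ∩ U).Nonempty} :=
        ⟨⟨φ₀, hφ₀.2⟩, (hFmem W hW _).mpr hφ₀.1, hφ₀x⟩
      filter_upwards [hT.eventually (hSopen.mem_nhds hSmem)] with i hi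
      obtain ⟨η, hηF, hηU⟩ := hi
      have h1 : ‖(η : WeakDual ℂ E) x‖ ≤ ballSup E (V i) x :=
        le_ballSup ⟨(hFmem (V i) (hV i) η).mp hηF, η.2⟩ x
      have h2 : p - ε / 2 < ‖(η : WeakDual ℂ E) x‖ := hηU
      linarith
    filter_upwards [hupper, hlower] with i h1 h2
    rw [Real.dist_eq, abs_sub_lt_iff]
    exact ⟨by linarith, by linarith⟩
  · -- convergence of sups implies Vietoris convergence
    intro h
    rw [vietTop, tendsto_nhds_generateFrom_iff]
    rintro S (⟨U, hUopen, rfl⟩ | ⟨U, hUopen, rfl⟩) hmem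
    · -- lower topology subbasic sets
      obtain ⟨σ, hσW, hσU⟩ := hmem
      obtain ⟨U', hU'open, hUeq⟩ := isOpen_induced_iff.mp hUopen
      have hωU' : (σ : WeakDual ℂ E) ∈ U' := by
        rw [← hUeq] at hσU; exact hσU
      obtain ⟨t, ε, hε, hsub⟩ :=
        exists_finset_ball_subset (σ : WeakDual ℂ E) (hU'open.mem_nhds hωU')
      have hkey := key_lower V hV W h ((hFmem W hW σ).mp hσW) σ.2 t hε
      filter_upwards [hkey] with i hi
      obtain ⟨φ, hφ, hclose⟩ := hi
      refine ⟨⟨φ, hφ.2⟩, (hFmem (V i) (hV i) _).mpr hφ.1, ?_⟩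
      rw [← hUeq]
      exact hsub hclose
    · -- upper Vietoris subbasic sets
      haveI : CompactSpace ↥(dualBall E) := isCompact_iff_compactSpace.mp isCompact_dualBall
      set C : Set ↥(dualBall E) := Uᶜ with hC
      have hCcomp : IsCompact C := hUopen.isClosed_compl.isCompact
      have hsep : ∀ σ : C, ∃ x : E, (∀ φ ∈ W, φ x = 0) ∧
          ((σ : ↥(dualBall E)) : WeakDual ℂ E) x ≠ 0 := by
        intro σ
        refine exists_annihilating W hW fun hmemW => ?_
        exact σ.2 (hmem ((hFmem W hW σ).mpr hmemW))
      choose xs hxs1 hxs2 using hsep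
      set O : C → Set ↥(dualBall E) := fun σ =>
        {η : ↥(dualBall E) |
          ‖((σ : ↥(dualBall E)) : WeakDual ℂ E) (xs σ)‖ / 2 < ‖(η : WeakDual ℂ E) (xs σ)‖}
        with hO
      have hOopen : ∀ σ : C, IsOpen (O σ) := fun σ =>
        isOpen_lt continuous_const
          (((WeakDual.eval_continuous (xs σ)).comp continuous_subtype_val).norm)
      have hcover : C ⊆ ⋃ σ : C, O σ := by
        intro σ' hσ'
        refine mem_iUnion.mpr ⟨⟨σ', hσ'⟩, ?_⟩
        show ‖((⟨σ', hσ'⟩ : C) : ↥(dualBall E)).1 (xs ⟨σ', hσ'⟩)‖ / 2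
          < ‖(σ' : WeakDual ℂ E) (xs ⟨σ', hσ'⟩)‖
        have hpos : 0 < ‖(σ' : WeakDual ℂ E) (xs ⟨σ', hσ'⟩)‖ :=
          norm_pos_iff.mpr (hxs2 ⟨σ', hσ'⟩)
        linarith
      obtain ⟨tf, htf⟩ := hCcomp.elim_finite_subcover O hOopen hcover
      have hptwise : ∀ σ ∈ (tf : Set C), ∀ᶠ i in atTop,
          ballSup E (V i) (xs σ) <
            ‖((σ : ↥(dualBall E)) : WeakDual ℂ E) (xs σ)‖ / 2 := by
        intro σ _
        have hpos : 0 < ‖((σ : ↥(dualBall E)) : WeakDual ℂ E) (xs σ)‖ / 2 := by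
          have := norm_pos_iff.mpr (hxs2 σ)
          linarith
        have h0 : ballSup E W (xs σ) = 0 := ballSup_eq_zero (hxs1 σ)
        have := Metric.tendsto_nhds.mp (h (xs σ)) _ hpos
        filter_upwards [this] with i hi
        rw [h0, Real.dist_eq, sub_zero, abs_lt] at hi
        exact hi.2
      filter_upwards [(eventually_all_finite (tf : Set C).toFinite).mpr hptwise] with i hi
      intro η hη
      by_contra hηU
      have hηC : η ∈ C := hηU
      obtain ⟨σ, hσt, hηO⟩ := mem_iUnion₂.mp (htf hηC)
      have h1 : ‖(η : WeakDual ℂ E) (xs σ)‖ ≤ ballSup E (V i) (xs σ) :=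
        le_ballSup ⟨(hFmem (V i) (hV i) η).mp hη, η.2⟩ (xs σ)
      have h2 := hi σ hσt
      have h3 : ‖((σ : ↥(dualBall E)) : WeakDual ℂ E) (xs σ)‖ / 2
          < ‖(η : WeakDual ℂ E) (xs σ)‖ := hηO
      linarith
end

section
/- Let (E, ‖·‖) be a normed vector space. Then the set G_{‖·‖}(E) of all norm-closed linear subspaces of E is closed in F*(E) for the Wijsman topology associated to the metric d(u,v) = ‖u − v‖. -/
open TopologicalSpace Set

/-- Subbasis making each `F ↦ d(x, F)` continuous. -/
def wijsSets (X : Type*) [MetricSpace X] : Set (Set (NClosed X)) :=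
  {S : Set (NClosed X) |
    ∃ (x : X) (U : Set ℝ), IsOpen U ∧
      S = (fun F : NClosed X => Metric.infDist x F.1) ⁻¹' U}

/-- The Wijsman topology on `F*(X)`: the coarsest topology making each `F ↦ d(x, F)`
continuous. -/
def wijsTop (X : Type*) [MetricSpace X] : TopologicalSpace (NClosed X) :=
  TopologicalSpace.generateFrom (wijsSets X)

/-- For a normed vector space `(E, ‖·‖)`, the set `G_{‖·‖}(E)` of norm-closed linear subspaces
of `E` is closed in `F*(E)` for the Wijsman topology associated to `d(u, v) = ‖u - v‖`. -/
theorem isClosed_subspaces_wijsman (E : Type*) [NormedAddCommGroup E] [NormedSpace ℂ E] :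
    @IsClosed (NClosed E) (wijsTop E)
      {F : NClosed E | ∃ V : Submodule ℂ E, F.1 = (V : Set E)} := by
  letI := wijsTop E
  have hcont : ∀ x : E, Continuous (fun F : NClosed E => Metric.infDist x F.1) := by
    intro x
    rw [continuous_def]
    intro U hU
    exact TopologicalSpace.GenerateOpen.basic _ ⟨x, U, hU, rfl⟩
  have key : {F : NClosed E | ∃ V : Submodule ℂ E, F.1 = (V : Set E)} =
      ⋂ (u : E) (v : E) (a : ℂ) (b : ℂ),
        {F : NClosed E | Metric.infDist (a • u + b • v) F.1 ≤
          ‖a‖ * Metric.infDist u F.1 + ‖b‖ * Metric.infDist v F.1} := by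
    ext F
    simp only [mem_setOf_eq, mem_iInter]
    constructor
    · rintro ⟨V, hV⟩ u v a b
      apply le_of_forall_pos_lt_add
      intro ε hε
      set δ : ℝ := ε / (‖a‖ + ‖b‖ + 1) with hδdef
      have hden : (0:ℝ) < ‖a‖ + ‖b‖ + 1 := by positivity
      have hδ : 0 < δ := div_pos hε hden
      have hne : F.1.Nonempty := F.2.2
      obtain ⟨p, hpF, hp⟩ := (Metric.infDist_lt_iff hne).mp
        (by linarith : Metric.infDist u F.1 < Metric.infDist u F.1 + δ)
      obtain ⟨q, hqF, hq⟩ := (Metric.infDist_lt_iff hne).mp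
        (by linarith : Metric.infDist v F.1 < Metric.infDist v F.1 + δ)
      have hmem : a • p + b • q ∈ F.1 := by
        rw [hV] at hpF hqF ⊢
        exact V.add_mem (V.smul_mem a hpF) (V.smul_mem b hqF)
      have h1 : Metric.infDist (a • u + b • v) F.1 ≤ dist (a • u + b • v) (a • p + b • q) :=
        Metric.infDist_le_dist_of_mem hmem
      have h2 : dist (a • u + b • v) (a • p + b • q) ≤ ‖a‖ * dist u p + ‖b‖ * dist v q := by
        rw [dist_eq_norm, dist_eq_norm, dist_eq_norm]
        calc ‖a • u + b • v - (a • p + b • q)‖ = ‖a • (u - p) + b • (v - q)‖ := by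
              congr 1; rw [smul_sub, smul_sub]; abel
          _ ≤ ‖a • (u - p)‖ + ‖b • (v - q)‖ := norm_add_le _ _
          _ = ‖a‖ * ‖u - p‖ + ‖b‖ * ‖v - q‖ := by rw [norm_smul, norm_smul]
      have h3 : ‖a‖ * dist u p + ‖b‖ * dist v q ≤
          ‖a‖ * (Metric.infDist u F.1 + δ) + ‖b‖ * (Metric.infDist v F.1 + δ) := by
        gcongr
      have h4 : (‖a‖ + ‖b‖) * δ < ε := by
        have heq : (‖a‖ + ‖b‖ + 1) * δ = ε := by
          rw [hδdef]; field_simp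
        nlinarith [hδ]
      nlinarith [norm_nonneg a, norm_nonneg b]
    · intro h
      obtain ⟨x0, hx0⟩ := F.2.2
      have hmem : ∀ x : E, Metric.infDist x F.1 ≤ 0 → x ∈ F.1 := by
        intro x hx
        exact (IsClosed.mem_iff_infDist_zero F.2.1 F.2.2).mpr
          (le_antisymm hx Metric.infDist_nonneg)
      have hzero : (0 : E) ∈ F.1 := by
        apply hmem
        have := h x0 x0 0 0
        simpa [Metric.infDist_zero_of_mem hx0] using this
      refine ⟨{ carrier := F.1
                zero_mem' := hzero
                add_mem' := ?_
                smul_mem' := ?_ }, rfl⟩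
      · intro u v hu hv
        apply hmem
        have := h u v 1 1
        simpa [Metric.infDist_zero_of_mem hu, Metric.infDist_zero_of_mem hv] using this
      · intro c u hu
        apply hmem
        have := h u u c 0
        simpa [Metric.infDist_zero_of_mem hu] using this
  rw [key]
  exact isClosed_iInter fun u => isClosed_iInter fun v => isClosed_iInter fun a =>
    isClosed_iInter fun b => isClosed_le (hcont _)
      ((continuous_const.mul (hcont _)).add (continuous_const.mul (hcont _)))
end

section
/- Let (E, ‖·‖) be a normed complex vector space. The polar map Φ : G_{‖·‖}(E) → G_{w*}(E*) defined by Φ(V) = V^⊥ = {ω ∈ E* : ω(x) = 0 for all x ∈ V} is a homeomorphism, where G_{‖·‖}(E) carries the Wijsman topology and G_{w*}(E*) carries the Vietoris topology. -/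
open TopologicalSpace Set

variable (E : Type*) [NormedAddCommGroup E] [NormedSpace ℂ E]

/-- The set `G_{‖·‖}(E)` of norm-closed linear subspaces of `E`. -/
abbrev GNorm := {V : Submodule ℂ E // IsClosed (V : Set E)}

/-- The Wijsman topology on `G_{‖·‖}(E)`: the coarsest topology making
`V ↦ inf_{y ∈ V} ‖x - y‖` continuous for every `x ∈ E`. -/
def wijsTopG : TopologicalSpace (GNorm E) :=
  TopologicalSpace.generateFrom
    {S : Set (GNorm E) |
      ∃ (x : E) (U : Set ℝ), IsOpen U ∧
        S = (fun V : GNorm E => Metric.infDist x (V.1 : Set E)) ⁻¹' U}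

/-- The set `G_{w*}(E*)` of weak-* closed linear subspaces of `E*`. -/
abbrev GWStar := {W : Submodule ℂ (WeakDual ℂ E) // IsClosed (W : Set (WeakDual ℂ E))}

/-- The Vietoris (Maréchal) topology on `G_{w*}(E*)`, induced by the identification of a
weak-* closed subspace `W` with its closed unit ball `(W)_1 = W ∩ (E*)_1` inside the closed
subsets of `(E*)_1` with the Vietoris topology. -/
noncomputable def vietTopG : TopologicalSpace (GWStar E) :=
  TopologicalSpace.induced
    (fun W : GWStar E =>
      (⟨Subtype.val ⁻¹' (W.1 : Set (WeakDual ℂ E)),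
        W.2.preimage continuous_subtype_val⟩ : Closeds (dualBall E)))
    (vietTop (dualBall E))

/-- The annihilator `V^⊥ = {ω ∈ E* | ω(x) = 0 for all x ∈ V}` of a subspace `V ⊆ E`, as a
subspace of the weak-* dual. -/
noncomputable def perp (V : Submodule ℂ E) : Submodule ℂ (WeakDual ℂ E) where
  carrier := {ω : WeakDual ℂ E | ∀ x ∈ V, ω x = 0}
  add_mem' := by
    intro a b ha hb x hx
    show a x + b x = 0
    rw [ha x hx, hb x hx, add_zero]
  zero_mem' := by intro x hx; rfl
  smul_mem' := by
    intro c ω hω x hx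
    show c • ω x = 0
    rw [hω x hx, smul_zero]

theorem perp_isClosed (V : Submodule ℂ E) :
    IsClosed ((perp E V : Set (WeakDual ℂ E))) := by
  have h : (perp E V : Set (WeakDual ℂ E)) = ⋂ x ∈ V, {ω : WeakDual ℂ E | ω x = 0} := by
    ext ω; simp [perp, Set.mem_iInter]; exact Iff.rfl
  rw [h]
  exact isClosed_biInter fun x _ =>
    isClosed_eq (WeakDual.eval_continuous x) continuous_const

open Topology Metric

namespace PerpHomeo

variable {E : Type*} [NormedAddCommGroup E] [NormedSpace ℂ E]

lemma le_infDist' {α : Type*} [PseudoMetricSpace α] {s : Set α} (hs : s.Nonempty) {x : α} {b : ℝ}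
    (h : ∀ y ∈ s, b ≤ dist x y) : b ≤ infDist x s := by
  by_contra hlt
  push_neg at hlt
  obtain ⟨y, hy, hd⟩ := (infDist_lt_iff hs).1 hlt
  exact absurd hd (not_lt.2 (h y hy))

lemma submodule_nonempty (V : Submodule ℂ E) : (V : Set E).Nonempty := ⟨0, V.zero_mem⟩

lemma infDist_add_le (V : Submodule ℂ E) (x y : E) :
    infDist (x + y) (V : Set E) ≤ infDist x (V : Set E) + infDist y (V : Set E) := by
  have h1 : ∀ a ∈ (V : Set E), infDist (x + y) (V : Set E) - dist x a ≤ infDist y (V : Set E) := by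
    intro a ha
    refine le_infDist' (submodule_nonempty V) fun b hb => ?_
    have hmem : a + b ∈ (V : Set E) := V.add_mem ha hb
    have h0 := infDist_le_dist_of_mem (x := x + y) hmem
    have hd : dist (x + y) (a + b) ≤ dist x a + dist y b := by
      rw [dist_eq_norm, dist_eq_norm, dist_eq_norm]
      calc ‖x + y - (a + b)‖ = ‖(x - a) + (y - b)‖ := by congr 1; abel
        _ ≤ ‖x - a‖ + ‖y - b‖ := norm_add_le _ _
    linarith
  have h2 : infDist (x + y) (V : Set E) - infDist y (V : Set E) ≤ infDist x (V : Set E) := by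
    refine le_infDist' (submodule_nonempty V) fun a ha => ?_
    linarith [h1 a ha]
  linarith

lemma infDist_smul_le (V : Submodule ℂ E) (a : ℂ) (x : E) :
    infDist (a • x) (V : Set E) ≤ ‖a‖ * infDist x (V : Set E) := by
  rcases eq_or_ne a 0 with rfl | ha
  · simp [infDist_zero_of_mem V.zero_mem]
  · have hpos : (0:ℝ) < ‖a‖ := norm_pos_iff.2 ha
    have h : ∀ y ∈ (V : Set E), infDist (a • x) (V : Set E) / ‖a‖ ≤ dist x y := by
      intro y hy
      have hmem : a • y ∈ (V : Set E) := V.smul_mem a hy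
      have h1 : infDist (a • x) (V : Set E) ≤ dist (a • x) (a • y) :=
        infDist_le_dist_of_mem hmem
      have h2 : dist (a • x) (a • y) = ‖a‖ * dist x y := by
        rw [dist_eq_norm, dist_eq_norm, ← smul_sub, norm_smul]
      rw [div_le_iff₀ hpos]
      rw [h2] at h1
      linarith
    have hle := le_infDist' (submodule_nonempty V) h
    calc infDist (a • x) (V : Set E) = infDist (a • x) (V : Set E) / ‖a‖ * ‖a‖ :=
          (div_mul_cancel₀ _ hpos.ne').symm
      _ ≤ infDist x (V : Set E) * ‖a‖ := mul_le_mul_of_nonneg_right hle hpos.le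
      _ = ‖a‖ * infDist x (V : Set E) := mul_comm _ _

lemma infDist_smul (V : Submodule ℂ E) {a : ℂ} (ha : a ≠ 0) (x : E) :
    infDist (a • x) (V : Set E) = ‖a‖ * infDist x (V : Set E) := by
  refine le_antisymm (infDist_smul_le V a x) ?_
  have h2 := infDist_smul_le V a⁻¹ (a • x)
  rw [inv_smul_smul₀ ha, norm_inv] at h2
  have hpos : (0:ℝ) < ‖a‖ := norm_pos_iff.2 ha
  calc ‖a‖ * infDist x (V : Set E) ≤ ‖a‖ * (‖a‖⁻¹ * infDist (a • x) (V : Set E)) :=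
        mul_le_mul_of_nonneg_left h2 hpos.le
    _ = infDist (a • x) (V : Set E) := by
        rw [← mul_assoc, mul_inv_cancel₀ hpos.ne', one_mul]

lemma norm_apply_le_infDist {V : Submodule ℂ E} {ω : WeakDual ℂ E}
    (hperp : ∀ y ∈ V, ω y = 0) (hball : ω ∈ dualBall E) (x : E) :
    ‖ω x‖ ≤ infDist x (V : Set E) := by
  refine le_infDist' (submodule_nonempty V) fun y hy => ?_
  have hx : ω x = ω (x - y) := by rw [map_sub, hperp y hy, sub_zero]
  rw [hx, dist_eq_norm]
  exact hball (x - y)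

lemma exists_perp_norm_eq (V : Submodule ℂ E) (hV : IsClosed (V : Set E)) (x : E) :
    ∃ ω : WeakDual ℂ E, (∀ y ∈ V, ω y = 0) ∧ ω ∈ dualBall E ∧
      ‖ω x‖ = infDist x (V : Set E) := by
  haveI : IsClosed (V : Set E) := hV
  obtain ⟨g, hg1, hg2⟩ := exists_dual_vector'' ℂ (Submodule.Quotient.mk x : E ⧸ V)
  have hbound : ∀ z : E, ‖(g.toLinearMap.comp V.mkQ) z‖ ≤ 1 * ‖z‖ := by
    intro z
    calc ‖g (Submodule.Quotient.mk z)‖ ≤ ‖g‖ * ‖(Submodule.Quotient.mk z : E ⧸ V)‖ :=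
          g.le_opNorm _
      _ ≤ 1 * ‖z‖ := by
          have := Submodule.Quotient.norm_mk_le V z
          have h0 : (0:ℝ) ≤ ‖(Submodule.Quotient.mk z : E ⧸ V)‖ := norm_nonneg _
          nlinarith [norm_nonneg z]
  set ωC : E →L[ℂ] ℂ := LinearMap.mkContinuous _ 1 hbound with hωC
  refine ⟨StrongDual.toWeakDual ωC, ?_, ?_, ?_⟩
  · intro y hy
    show ωC y = 0
    have : (Submodule.Quotient.mk y : E ⧸ V) = 0 := (Submodule.Quotient.mk_eq_zero V).2 hy
    show g (Submodule.Quotient.mk y) = 0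
    rw [this, map_zero]
  · intro z
    show ‖ωC z‖ ≤ ‖z‖
    have := hbound z; rw [one_mul] at this; exact this
  · show ‖ωC x‖ = _
    show ‖g (Submodule.Quotient.mk x)‖ = _
    rw [hg2]
    have hmk : ‖(Submodule.Quotient.mk x : E ⧸ V)‖ = infDist x (V : Set E) :=
      QuotientAddGroup.norm_mk x
    rw [← hmk]
    simp

end PerpHomeo
section HB

variable {X : Type*} [AddCommGroup X] [Module ℂ X] [Module ℝ X] [IsScalarTower ℝ ℂ X]

lemma PerpHomeo.hb_complex_seminorm (p : X → ℝ) (p_smul : ∀ (a : ℂ) (x : X), p (a • x) = ‖a‖ * p x)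
    (p_add : ∀ x y : X, p (x + y) ≤ p x + p y)
    (S : Submodule ℂ X) (f : S →ₗ[ℂ] ℂ) (hf : ∀ s : S, ‖f s‖ ≤ p s) :
    ∃ g : X →ₗ[ℂ] ℂ, (∀ s : S, g s = f s) ∧ ∀ x : X, ‖g x‖ ≤ p x := by
  have p_nonneg : ∀ x : X, 0 ≤ p x := by
    intro x
    have h0 : p 0 = 0 := by
      have := p_smul 0 x
      simpa using this
    have hneg : p (-x) = p x := by
      have := p_smul (-1) x
      simpa using this
    have := p_add x (-x)
    rw [add_neg_cancel, h0, hneg] at this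
    linarith
  -- restrict scalars and take real part
  set Sr : Submodule ℝ X := S.restrictScalars ℝ with hSr
  set fr : Sr →ₗ[ℝ] ℝ :=
    { toFun := fun s => (f ⟨s.1, s.2⟩).re
      map_add' := by
        rintro ⟨x, hx⟩ ⟨y, hy⟩
        have : (⟨x + y, Submodule.add_mem S hx hy⟩ : S) = ⟨x, hx⟩ + ⟨y, hy⟩ := rfl
        show (f ⟨x + y, _⟩).re = (f ⟨x, hx⟩).re + (f ⟨y, hy⟩).re
        rw [this, map_add, Complex.add_re]
      map_smul' := by
        rintro c ⟨x, hx⟩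
        show (f ⟨c • x, _⟩).re = c * (f ⟨x, hx⟩).re
        have h1 : ∀ h : c • x ∈ S, (⟨c • x, h⟩ : S) = (c : ℂ) • (⟨x, hx⟩ : S) := by
          intro h
          apply Subtype.ext
          show c • x = (c : ℂ) • x
          rw [← algebraMap_smul ℂ c x]
          rfl
        refine (congrArg (fun z => (f z).re) (h1 (Submodule.smul_of_tower_mem S c hx))).trans ?_
        rw [map_smul, smul_eq_mul]; simp [Complex.mul_re] } with hfr
  have hp_hom : ∀ c : ℝ, 0 < c → ∀ x : X, p (c • x) = c * p x := by
    intro c hc x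
    have h1 : c • x = ((c : ℂ)) • x := by
      rw [← algebraMap_smul ℂ c x]; rfl
    rw [h1, p_smul]
    simp [abs_of_pos hc]
  have hfrle : ∀ s : (⟨Sr, fr⟩ : LinearPMap (RingHom.id ℝ) X ℝ).domain, (⟨Sr, fr⟩ : LinearPMap (RingHom.id ℝ) X ℝ) s ≤ p s := by
    rintro ⟨x, hx⟩
    show (f ⟨x, hx⟩).re ≤ p x
    calc (f ⟨x, hx⟩).re ≤ ‖f ⟨x, hx⟩‖ := Complex.re_le_norm _
      _ ≤ p x := hf _
  obtain ⟨g0, hg0ext, hg0le⟩ :=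
    exists_extension_of_le_sublinear (⟨Sr, fr⟩ : LinearPMap (RingHom.id ℝ) X ℝ) p hp_hom p_add hfrle
  set g : X →ₗ[ℂ] ℂ := g0.extendTo𝕜'
  have hgapp : ∀ x : X, g x = (g0 x : ℂ) - Complex.I * (g0 ((Complex.I) • x) : ℂ) := by
    intro x
    have := LinearMap.extendTo𝕜'_apply (𝕜 := ℂ) g0 x
    simp at this; exact this
  refine ⟨g, ?_, ?_⟩
  · rintro ⟨x, hx⟩
    have hIx : Complex.I • x ∈ Sr := Submodule.smul_mem S Complex.I hx
    have e1 : g0 x = (f ⟨x, hx⟩).re := hg0ext ⟨x, hx⟩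
    have e2 : g0 (Complex.I • x) = (f ⟨Complex.I • x, hIx⟩).re := hg0ext ⟨Complex.I • x, hIx⟩
    have e3 : (⟨Complex.I • x, hIx⟩ : S) = Complex.I • (⟨x, hx⟩ : S) := rfl
    rw [hgapp, e1, e2, e3, map_smul]
    show _ = f ⟨x, hx⟩
    set z := f ⟨x, hx⟩
    have : (Complex.I • z).re = -z.im := by
      simp [Complex.smul_re]
    rw [this]
    apply Complex.ext <;> simp
  · intro x
    by_cases hx : g x = 0
    · rw [hx, norm_zero]; exact p_nonneg x
    · have hsq := LinearMap.norm_extendTo𝕜'_apply_sq (𝕜 := ℂ) g0 x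
      have h1 : ‖g x‖ ^ 2 ≤ p ((starRingEnd ℂ) (g x) • x) := by
        rw [show ‖g x‖ ^ 2 = g0 ((starRingEnd ℂ) (g x) • x) from hsq]; exact hg0le _
      have h2 : p ((starRingEnd ℂ) (g x) • x) = ‖g x‖ * p x := by
        rw [p_smul]
        congr 1
        simp
      have hpos : 0 < ‖g x‖ := norm_pos_iff.2 hx
      nlinarith [h1, h2]

end HB
namespace PerpHomeo

variable {E : Type*} [NormedAddCommGroup E] [NormedSpace ℂ E]

lemma isCompact_dualBall : IsCompact (dualBall E) := by
  have heq : dualBall E = WeakDual.polar ℂ (Metric.closedBall (0 : E) 1) := by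
    rw [WeakDual.polar_def]
    ext ω
    simp only [Set.mem_setOf_eq, dualBall]
    constructor
    · intro hω x hx
      rw [Metric.mem_closedBall, dist_zero_right] at hx
      exact (hω x).trans hx
    · intro hω x
      rcases eq_or_ne x 0 with rfl | hx
      · simp
      · have hnx : (0:ℝ) < ‖x‖ := norm_pos_iff.2 hx
        have hmem : ((‖x‖⁻¹ : ℝ) : ℂ) • x ∈ Metric.closedBall (0 : E) 1 := by
          rw [Metric.mem_closedBall, dist_zero_right, norm_smul]
          simp [abs_of_pos (inv_pos.2 hnx), inv_mul_cancel₀ hnx.ne']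
        have := hω _ hmem
        rw [map_smul, norm_smul] at this
        have hn : ‖((‖x‖⁻¹ : ℝ) : ℂ)‖ = ‖x‖⁻¹ := by
          simp [abs_of_pos (inv_pos.2 hnx)]
        rw [hn] at this
        calc ‖ω x‖ = ‖x‖ * (‖x‖⁻¹ * ‖ω x‖) := by field_simp
          _ ≤ ‖x‖ * 1 := by nlinarith
          _ = ‖x‖ := mul_one _
  rw [heq]
  exact WeakDual.isCompact_polar ℂ (Metric.closedBall_mem_nhds 0 one_pos)

lemma exists_finset_subset_open {U : Set (WeakDual ℂ E)} (hU : IsOpen U) {ω₀ : WeakDual ℂ E}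
    (hmem : ω₀ ∈ U) :
    ∃ (s : Finset E) (ε : ℝ), 0 < ε ∧ {ω : WeakDual ℂ E | ∀ x ∈ s, ‖ω x - ω₀ x‖ < ε} ⊆ U := by
  have hinj : Function.Injective (topDualPairing ℂ E) := fun v w h =>
    ContinuousLinearMap.coe_injective h
  have hemb := WeakBilin.isEmbedding (B := topDualPairing ℂ E) hinj
  obtain ⟨t, ht, htU⟩ := hemb.isInducing.isOpen_iff.1 hU
  have hω₀t : (fun y => (topDualPairing ℂ E) ω₀ y) ∈ t := by
    rw [← htU] at hmem; exact hmem
  obtain ⟨I, u, hIu, hpi⟩ := isOpen_pi_iff.1 ht _ hω₀t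
  have hδ : ∀ x : I, ∃ δ : ℝ, 0 < δ ∧ Metric.ball ((topDualPairing ℂ E) ω₀ x.1) δ ⊆ u x.1 := by
    rintro ⟨x, hx⟩
    exact Metric.isOpen_iff.1 (hIu x hx).1 _ (hIu x hx).2
  choose δ hδpos hδball using hδ
  rcases I.eq_empty_or_nonempty with rfl | hne
  · refine ⟨∅, 1, one_pos, fun ω _ => ?_⟩
    rw [← htU]
    apply hpi
    simp
  · have hattne : I.attach.Nonempty := Finset.attach_nonempty_iff.2 hne
    refine ⟨I, I.attach.inf' hattne δ, ?_, ?_⟩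
    · rw [Finset.lt_inf'_iff]
      exact fun i _ => hδpos i
    · intro ω hω
      rw [← htU]
      apply hpi
      intro x hx
      have hx' : x ∈ I := hx
      apply hδball ⟨x, hx'⟩
      rw [Metric.mem_ball]
      have h1 : dist ((topDualPairing ℂ E) ω x) ((topDualPairing ℂ E) ω₀ x) = ‖ω x - ω₀ x‖ := by
        rw [dist_eq_norm]; rfl
      rw [h1]
      exact lt_of_lt_of_le (hω x hx') (Finset.inf'_le _ (Finset.mem_attach _ ⟨x, hx'⟩))

end PerpHomeo
namespace PerpHomeo

variable {E : Type*} [NormedAddCommGroup E] [NormedSpace ℂ E]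

lemma le_of_perp_le {V₁ V₂ : Submodule ℂ E} (hV₂ : IsClosed (V₂ : Set E))
    (h : ∀ ω : WeakDual ℂ E, ω ∈ perp E V₂ → ω ∈ perp E V₁) : V₁ ≤ V₂ := by
  intro x hx
  obtain ⟨ω, hω1, hω2, hω3⟩ := exists_perp_norm_eq V₂ hV₂ x
  have hωperp : ω ∈ perp E V₂ := hω1
  have h0 : ω x = 0 := h ω hωperp x hx
  have : infDist x (V₂ : Set E) = 0 := by rw [← hω3, h0, norm_zero]
  exact (hV₂.mem_iff_infDist_zero (submodule_nonempty V₂)).2 this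

lemma perp_injective {V₁ V₂ : GNorm E} (h : perp E V₁.1 = perp E V₂.1) : V₁ = V₂ := by
  apply Subtype.ext
  apply le_antisymm
  · exact le_of_perp_le V₂.2 (fun ω hω => h ▸ hω)
  · exact le_of_perp_le V₁.2 (fun ω hω => h ▸ hω)

/-- evaluation at a point as a linear map on the weak dual -/
noncomputable def evalLM (x : E) : WeakDual ℂ E →ₗ[ℂ] ℂ where
  toFun ω := ω x
  map_add' a b := rfl
  map_smul' c a := rfl

lemma perp_surjective (W : GWStar E) : ∃ V : GNorm E, perp E V.1 = W.1 := by
  classical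
  set V : Submodule ℂ E :=
    { carrier := {x : E | ∀ ω ∈ W.1, ω x = 0}
      add_mem' := by
        intro a b ha hb ω hω
        rw [map_add, ha ω hω, hb ω hω, add_zero]
      zero_mem' := by intro ω _; exact map_zero ω
      smul_mem' := by
        intro c x hx ω hω
        rw [map_smul, hx ω hω, smul_zero] } with hVdef
  have hVc : IsClosed (V : Set E) := by
    have heq : (V : Set E) = ⋂ ω ∈ W.1, {x : E | ω x = 0} := by
      ext x
      simp only [Set.mem_iInter, SetLike.mem_coe]
      exact Iff.rfl
    rw [heq]
    exact isClosed_biInter fun ω _ => isClosed_eq (map_continuous ω) continuous_const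
  refine ⟨⟨V, hVc⟩, le_antisymm ?_ ?_⟩
  · intro ω₀ hω₀
    by_contra hnW
    have hUopen : IsOpen ((W.1 : Set (WeakDual ℂ E))ᶜ) := W.2.isOpen_compl
    obtain ⟨s, ε, hε, hsub⟩ := exists_finset_subset_open hUopen hnW
    set T : WeakDual ℂ E →ₗ[ℂ] ((i : s) → ℂ) := LinearMap.pi (fun i : s => evalLM (i.1)) with hT
    set A : Submodule ℂ ((i : s) → ℂ) := W.1.map T with hA
    have hbA : T ω₀ ∉ A := by
      rintro ⟨ω, hωW, hTeq⟩
      have hωU : ω ∈ (W.1 : Set (WeakDual ℂ E))ᶜ := by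
        apply hsub
        intro x hx
        have : ω x = ω₀ x := congrFun hTeq ⟨x, hx⟩
        rw [this, sub_self, norm_zero]
        exact hε
      exact hωU hωW
    obtain ⟨ψ, hψ1, hψ2⟩ := Submodule.exists_dual_map_eq_bot_of_notMem hbA inferInstance
    have hker : ∀ a ∈ A, ψ a = 0 := by
      intro a ha
      have : ψ a ∈ A.map ψ := Submodule.mem_map_of_mem ha
      rw [hψ2] at this
      simpa using this
    set xstar : E := ∑ i : s, ψ (fun j => if i = j then 1 else 0) • (i.1 : E) with hxstar
    have hkey : ∀ ω : WeakDual ℂ E, ω xstar = ψ (T ω) := by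
      intro ω
      rw [hxstar, map_sum]
      rw [LinearMap.pi_apply_eq_sum_univ ψ (T ω)]
      refine Finset.sum_congr rfl fun i _ => ?_
      rw [map_smul]
      show ψ _ • ω i.1 = (T ω) i • ψ _
      have : (T ω) i = ω i.1 := rfl
      rw [this, smul_eq_mul, smul_eq_mul, mul_comm]
    have hxV : xstar ∈ V := by
      intro ω hω
      rw [hkey ω]
      exact hker _ (Submodule.mem_map_of_mem hω)
    have h0 : ω₀ xstar = 0 := hω₀ xstar hxV
    rw [hkey ω₀] at h0
    exact hψ1 h0
  · intro ω hω x hx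
    exact hx ω hω

end PerpHomeo
namespace PerpHomeo

variable {E : Type*} [NormedAddCommGroup E] [NormedSpace ℂ E]

/-- The closed unit ball of `perp V` inside the dual ball, as a closed subset. -/
noncomputable def ballMap (V : GNorm E) : Closeds (dualBall E) :=
  ⟨Subtype.val ⁻¹' ((perp E V.1 : Set (WeakDual ℂ E))),
    (perp_isClosed E V.1).preimage continuous_subtype_val⟩

lemma mem_ballMap {V : GNorm E} {ν : ↥(dualBall E)} :
    ν ∈ (ballMap V : Set ↥(dualBall E)) ↔ ∀ y ∈ V.1, (ν : WeakDual ℂ E) y = 0 :=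
  Iff.rfl

lemma idA (V : GNorm E) (x : E) (a : ℝ) :
    ((ballMap V : Set ↥(dualBall E)) ∩
      {ν : ↥(dualBall E) | a < ‖(ν : WeakDual ℂ E) x‖}).Nonempty ↔
      a < infDist x (V.1 : Set E) := by
  constructor
  · rintro ⟨ν, hν, hlt⟩
    exact lt_of_lt_of_le hlt (norm_apply_le_infDist (mem_ballMap.1 hν) ν.2 x)
  · intro h
    obtain ⟨ω, hω1, hω2, hω3⟩ := exists_perp_norm_eq V.1 V.2 x
    exact ⟨⟨ω, hω2⟩, mem_ballMap.2 hω1, by rw [Set.mem_setOf_eq]; exact hω3 ▸ h⟩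

lemma idB (V : GNorm E) (x : E) (a : ℝ) :
    ((ballMap V : Set ↥(dualBall E)) ⊆
      {ν : ↥(dualBall E) | ‖(ν : WeakDual ℂ E) x‖ < a}) ↔
      infDist x (V.1 : Set E) < a := by
  constructor
  · intro h
    obtain ⟨ω, hω1, hω2, hω3⟩ := exists_perp_norm_eq V.1 V.2 x
    have := h (show (⟨ω, hω2⟩ : ↥(dualBall E)) ∈ (ballMap V : Set ↥(dualBall E)) from
      mem_ballMap.2 hω1)
    rw [Set.mem_setOf_eq] at this
    rwa [hω3] at this
  · intro h ν hν
    exact lt_of_le_of_lt (norm_apply_le_infDist (mem_ballMap.1 hν) ν.2 x) h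

lemma wijs_isOpen_basic (x : E) {U : Set ℝ} (hU : IsOpen U) :
    IsOpen[wijsTopG E] ((fun V : GNorm E => infDist x (V.1 : Set E)) ⁻¹' U) :=
  TopologicalSpace.GenerateOpen.basic _ ⟨x, U, hU, rfl⟩

lemma upper_open {U : Set ↥(dualBall E)} (hU : IsOpen U) :
    IsOpen[wijsTopG E] {V : GNorm E | (ballMap V : Set ↥(dualBall E)) ⊆ U} := by
  classical
  letI := wijsTopG E
  rw [isOpen_iff_forall_mem_open]
  intro V₀ hV₀
  haveI : CompactSpace ↥(dualBall E) := isCompact_iff_compactSpace.1 isCompact_dualBall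
  have hUc : IsCompact (Uᶜ) := hU.isClosed_compl.isCompact
  have hch : ∀ ν : {ν : ↥(dualBall E) // ν ∉ U},
      ∃ x : E, x ∈ V₀.1 ∧ ((ν : ↥(dualBall E)) : WeakDual ℂ E) x ≠ 0 := by
    rintro ⟨ν, hν⟩
    by_contra hcon
    push_neg at hcon
    have hmem : ν ∈ (ballMap V₀ : Set ↥(dualBall E)) :=
      mem_ballMap.2 fun y hy => hcon y hy
    exact hν (hV₀ hmem)
  choose xw hxwV hxw0 using hch
  set G : {ν : ↥(dualBall E) // ν ∉ U} → Set ↥(dualBall E) := fun ν =>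
    {μ : ↥(dualBall E) | ‖((ν : ↥(dualBall E)) : WeakDual ℂ E) (xw ν)‖ / 2 <
      ‖(μ : WeakDual ℂ E) (xw ν)‖} with hG
  have hGopen : ∀ ν, IsOpen (G ν) := fun ν =>
    isOpen_lt continuous_const ((WeakDual.eval_continuous (xw ν)).comp continuous_subtype_val).norm
  have hcover : Uᶜ ⊆ ⋃ ν, G ν := by
    intro ν hν
    refine Set.mem_iUnion.2 ⟨⟨ν, hν⟩, ?_⟩
    exact half_lt_self (norm_pos_iff.2 (hxw0 ⟨ν, hν⟩))
  obtain ⟨t, ht⟩ := hUc.elim_finite_subcover G hGopen hcover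
  refine ⟨⋂ ν ∈ t, (fun V : GNorm E => infDist (xw ν) (V.1 : Set E)) ⁻¹'
      Set.Iio (‖((ν : ↥(dualBall E)) : WeakDual ℂ E) (xw ν)‖ / 2), ?_, ?_, ?_⟩
  · intro V hV
    intro μ hμ
    by_contra hmU
    obtain ⟨ν, hνt, hνG⟩ := Set.mem_iUnion₂.1 (ht hmU)
    have h1 : ‖(μ : WeakDual ℂ E) (xw ν)‖ ≤ infDist (xw ν) (V.1 : Set E) :=
      norm_apply_le_infDist (mem_ballMap.1 hμ) μ.2 _
    have h2 : infDist (xw ν) (V.1 : Set E) <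
        ‖((ν : ↥(dualBall E)) : WeakDual ℂ E) (xw ν)‖ / 2 := by
      have := Set.mem_iInter₂.1 hV ν hνt
      exact this
    have h3 : ‖((ν : ↥(dualBall E)) : WeakDual ℂ E) (xw ν)‖ / 2 <
        ‖(μ : WeakDual ℂ E) (xw ν)‖ := hνG
    linarith
  · exact isOpen_biInter_finset fun ν _ => wijs_isOpen_basic _ isOpen_Iio
  · refine Set.mem_iInter₂.2 fun ν _ => ?_
    show infDist (xw ν) (V₀.1 : Set E) < _
    rw [infDist_zero_of_mem (hxwV ν)]
    exact half_pos (norm_pos_iff.2 (hxw0 ν))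

end PerpHomeo
namespace PerpHomeo

variable {E : Type*} [NormedAddCommGroup E] [NormedSpace ℂ E]

set_option maxHeartbeats 1000000 in
lemma lower_open {U : Set ↥(dualBall E)} (hU : IsOpen U) :
    IsOpen[wijsTopG E] {V : GNorm E | ((ballMap V : Set ↥(dualBall E)) ∩ U).Nonempty} := by
  classical
  letI := wijsTopG E
  rw [isOpen_iff_forall_mem_open]
  rintro V₀ ⟨ν₀, hν₀B, hν₀U⟩
  obtain ⟨U', hU', hpre⟩ := isOpen_induced_iff.1 hU
  set ω₀ : WeakDual ℂ E := ν₀.1 with hω₀def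
  have hω₀V₀ : ∀ y ∈ V₀.1, ω₀ y = 0 := mem_ballMap.1 hν₀B
  have hω₀U' : ω₀ ∈ U' := by rw [← hpre] at hν₀U; exact hν₀U
  obtain ⟨s, ε, hε, hsub⟩ := exists_finset_subset_open hU' hω₀U'
  -- constants
  set C : ℝ := 1 + ∑ x ∈ s, ‖x‖ with hCdef
  have hC : 0 < C := by
    have : (0:ℝ) ≤ ∑ x ∈ s, ‖x‖ := Finset.sum_nonneg fun x _ => norm_nonneg x
    simp only [hCdef]; linarith
  have hxC : ∀ x ∈ s, ‖x‖ < C := by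
    intro x hx
    have h1 : ‖x‖ ≤ ∑ y ∈ s, ‖y‖ :=
      Finset.single_le_sum (fun y _ => norm_nonneg y) hx
    simp only [hCdef]; linarith
  set δ : ℝ := ε / (3 * C) with hδdef
  have hδ : 0 < δ := by positivity
  have h3δ : ∀ x ∈ s, 3 * δ * ‖x‖ < ε := by
    intro x hx
    have hx' := hxC x hx
    have : 3 * δ = ε / C := by rw [hδdef]; field_simp
    rw [this]
    rw [div_mul_eq_mul_div, div_lt_iff₀ hC]
    nlinarith [norm_nonneg x]
  -- the span and a finite net of its unit sphere
  set M : Submodule ℂ E := Submodule.span ℂ (s : Set E) with hMdef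
  haveI : FiniteDimensional ℂ M := FiniteDimensional.span_finset ℂ s
  haveI : ProperSpace M := FiniteDimensional.proper ℂ M
  have hcs : IsCompact (Metric.sphere (0 : M) 1) := isCompact_sphere _ _
  have hcover : Metric.sphere (0 : M) 1 ⊆ ⋃ y : M, Metric.ball y δ := fun u _ =>
    Set.mem_iUnion.2 ⟨u, Metric.mem_ball_self hδ⟩
  obtain ⟨t, ht⟩ := hcs.elim_finite_subcover (fun y : M => Metric.ball y δ)
    (fun _ => Metric.isOpen_ball) hcover
  refine ⟨⋂ y ∈ t, (fun V : GNorm E => infDist (y : E) (V.1 : Set E)) ⁻¹'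
      Set.Ioi (infDist (y : E) (V₀.1 : Set E) - δ), ?_, ?_, ?_⟩
  · -- the neighbourhood is contained in the set
    intro V hV
    -- the key estimate on the unit sphere of M
    have key1 : ∀ u : M, ‖u‖ = 1 →
        infDist (u : E) (V₀.1 : Set E) ≤ infDist (u : E) (V.1 : Set E) + 3 * δ := by
      intro u hu
      have husph : u ∈ Metric.sphere (0 : M) 1 := by
        rw [mem_sphere_zero_iff_norm]; exact hu
      obtain ⟨y, hyt, hyb⟩ := Set.mem_iUnion₂.1 (ht husph)
      have hdist : dist (u : E) (y : E) < δ := by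
        have h1 : dist u y < δ := Metric.mem_ball.1 hyb
        have h2 : dist (u : E) (y : E) = dist u y := rfl
        rw [h2]; exact h1
      have e1 : infDist (u : E) (V₀.1 : Set E) ≤
          infDist (y : E) (V₀.1 : Set E) + dist (u : E) (y : E) :=
        infDist_le_infDist_add_dist
      have e2 : infDist (y : E) (V₀.1 : Set E) - δ < infDist (y : E) (V.1 : Set E) :=
        Set.mem_iInter₂.1 hV y hyt
      have e3 : infDist (y : E) (V.1 : Set E) ≤
          infDist (u : E) (V.1 : Set E) + dist (y : E) (u : E) :=
        infDist_le_infDist_add_dist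
      have e4 : dist (y : E) (u : E) = dist (u : E) (y : E) := dist_comm _ _
      linarith
    have key : ∀ u : M,
        infDist (u : E) (V₀.1 : Set E) ≤ infDist (u : E) (V.1 : Set E) + 3 * δ * ‖(u : E)‖ := by
      intro u
      rcases eq_or_ne u 0 with rfl | hu
      · have h0 : ((0 : M) : E) = 0 := rfl
        rw [h0, infDist_zero_of_mem V₀.1.zero_mem]
        have := infDist_nonneg (s := (V.1 : Set E)) (x := (0:E))
        positivity
      · set r : ℝ := ‖(u : E)‖ with hrdef
        have hr : 0 < r := by
          rw [hrdef]
          rw [norm_pos_iff]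
          simpa using hu
        set uh : M := ((r⁻¹ : ℝ) : ℂ) • u with huh
        have hcabs : ∀ q : ℝ, 0 ≤ q → ‖((q : ℝ) : ℂ)‖ = q := by
          intro q hq
          rw [Complex.norm_real]
          exact Real.norm_of_nonneg hq
        have hMnorm : ‖u‖ = r := rfl
        have huhn : ‖uh‖ = 1 := by
          rw [huh, norm_smul, hcabs _ (inv_nonneg.2 hr.le), hMnorm, inv_mul_cancel₀ hr.ne']
        have hback : (u : E) = ((r : ℝ) : ℂ) • (uh : E) := by
          rw [huh]
          have : ((uh : E)) = ((r⁻¹ : ℝ) : ℂ) • (u : E) := rfl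
          rw [huh] at this
          rw [this, smul_smul]
          have : ((r : ℝ) : ℂ) * ((r⁻¹ : ℝ) : ℂ) = 1 := by
            rw [← Complex.ofReal_mul, mul_inv_cancel₀ hr.ne']
            simp
          rw [this, one_smul]
      -- scale key1
        have hk := key1 uh huhn
        have hrc : ((r : ℝ) : ℂ) ≠ 0 := by
          simpa using hr.ne'
        have hnr : ‖((r : ℝ) : ℂ)‖ = r := hcabs _ hr.le
        have s1 : infDist (u : E) (V₀.1 : Set E) = r * infDist (uh : E) (V₀.1 : Set E) := by
          rw [hback, infDist_smul V₀.1 hrc, hnr]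
        have s2 : infDist (u : E) (V.1 : Set E) = r * infDist (uh : E) (V.1 : Set E) := by
          rw [hback, infDist_smul V.1 hrc, hnr]
        rw [s1, s2]
        nlinarith [mul_le_mul_of_nonneg_left hk hr.le, hr.le]
    -- Hahn–Banach extension with the seminorm p
    set p : E × E → ℝ := fun z => infDist z.1 (V.1 : Set E) + 3 * δ * ‖z.2‖ with hpdef
    have p_add : ∀ z w : E × E, p (z + w) ≤ p z + p w := by
      intro z w
      have h1 := infDist_add_le V.1 z.1 w.1
      have h2 : ‖z.2 + w.2‖ ≤ ‖z.2‖ + ‖w.2‖ := norm_add_le _ _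
      simp only [hpdef, Prod.fst_add, Prod.snd_add]
      have h2' : 3 * δ * ‖z.2 + w.2‖ ≤ 3 * δ * (‖z.2‖ + ‖w.2‖) :=
        mul_le_mul_of_nonneg_left h2 (by positivity)
      linarith
    have p_smul : ∀ (a : ℂ) (z : E × E), p (a • z) = ‖a‖ * p z := by
      intro a z
      rcases eq_or_ne a 0 with rfl | ha
      · simp only [hpdef, zero_smul, norm_zero]
        have h0 : ((0 : E × E)).1 = (0 : E) := rfl
        have h1 : ((0 : E × E)).2 = (0 : E) := rfl
        rw [h0, h1, infDist_zero_of_mem V.1.zero_mem]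
        simp
      · simp only [hpdef, Prod.smul_fst, Prod.smul_snd]
        rw [infDist_smul V.1 ha, norm_smul]
        ring
    set Sd : Submodule ℂ (E × E) := M.map (LinearMap.prod LinearMap.id LinearMap.id) with hSd
    set f : Sd →ₗ[ℂ] ℂ :=
      (WeakDual.toStrongDual ω₀).toLinearMap.comp ((LinearMap.fst ℂ E E).comp Sd.subtype) with hf
    have hfle : ∀ z : Sd, ‖f z‖ ≤ p z := by
      rintro ⟨z, hz⟩
      obtain ⟨u, huM, rfl⟩ := hz
      show ‖ω₀ u‖ ≤ p (u, u)
      have h1 : ‖ω₀ u‖ ≤ infDist u (V₀.1 : Set E) :=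
        norm_apply_le_infDist hω₀V₀ ν₀.2 u
      have h2 := key ⟨u, huM⟩
      simp only [hpdef]
      have h3 : ((⟨u, huM⟩ : M) : E) = u := rfl
      rw [h3] at h2
      linarith
    obtain ⟨g, hgext, hgle⟩ := hb_complex_seminorm p p_smul p_add Sd f hfle
    set ωlin : E →ₗ[ℂ] ℂ := g.comp (LinearMap.inl ℂ E E) with hωlin
    have hbound : ∀ z : E, ‖ωlin z‖ ≤ 1 * ‖z‖ := by
      intro z
      have h1 : ‖g (z, 0)‖ ≤ p (z, 0) := hgle _
      have h2 : p (z, 0) = infDist z (V.1 : Set E) := by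
        simp [hpdef]
      have h3 : infDist z (V.1 : Set E) ≤ ‖z‖ := by
        have := infDist_le_dist_of_mem (x := z) V.1.zero_mem
        rwa [dist_zero_right] at this
      show ‖g (z, 0)‖ ≤ 1 * ‖z‖
      rw [one_mul]
      linarith
    set ωC : E →L[ℂ] ℂ := LinearMap.mkContinuous ωlin 1 hbound with hωC
    set ω : WeakDual ℂ E := StrongDual.toWeakDual ωC with hω
    have hωapp : ∀ z : E, ω z = g (z, 0) := fun z => rfl
    have hωball : ω ∈ dualBall E := by
      intro z
      rw [hωapp]
      have := hbound z; rw [one_mul] at this; exact this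
    have hωperp : ∀ y ∈ V.1, ω y = 0 := by
      intro y hy
      rw [hωapp]
      have h1 : ‖g (y, 0)‖ ≤ p (y, 0) := hgle _
      have h2 : p (y, 0) = 0 := by
        simp [hpdef, infDist_zero_of_mem hy]
      rw [← norm_eq_zero]
      have := norm_nonneg (g (y, 0))
      linarith
    have hclose : ∀ x ∈ s, ‖ω x - ω₀ x‖ < ε := by
      intro x hx
      have hxM : x ∈ M := Submodule.subset_span hx
      have hmem : ((x, x) : E × E) ∈ Sd := ⟨x, hxM, rfl⟩
      have hx0 : ω₀ x = g (x, x) := by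
        have := hgext ⟨(x, x), hmem⟩
        exact this.symm
      rw [hωapp, hx0]
      have hdiff : g (x, 0) - g (x, x) = g ((0 : E), -x) := by
        rw [← map_sub]
        congr 1
        simp [Prod.ext_iff]
      rw [hdiff]
      have h1 : ‖g ((0 : E), -x)‖ ≤ p ((0 : E), -x) := hgle _
      have h2 : p ((0 : E), -x) = 3 * δ * ‖x‖ := by
        simp [hpdef, infDist_zero_of_mem V.1.zero_mem]
      rw [h2] at h1
      exact lt_of_le_of_lt h1 (h3δ x hx)
    refine ⟨⟨ω, hωball⟩, mem_ballMap.2 hωperp, ?_⟩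
    rw [← hpre]
    exact hsub hclose
  · exact isOpen_biInter_finset fun y _ => wijs_isOpen_basic _ isOpen_Ioi
  · refine Set.mem_iInter₂.2 fun y _ => ?_
    show infDist (y : E) (V₀.1 : Set E) ∈ Set.Ioi _
    rw [Set.mem_Ioi]
    exact sub_lt_self _ hδ

end PerpHomeo
/-- The polar map `Φ : G_{‖·‖}(E) → G_{w*}(E*)`, `V ↦ V^⊥`, is a homeomorphism from the
Wijsman topology to the Vietoris topology. -/
theorem isHomeomorph_perp :
    @IsHomeomorph (GNorm E) (GWStar E) (wijsTopG E) (vietTopG E)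
      (fun V : GNorm E => (⟨perp E V.1, perp_isClosed E V.1⟩ : GWStar E)) := by
  classical
  letI tC : TopologicalSpace (Closeds (dualBall E)) := vietTop (dualBall E)
  letI tG : TopologicalSpace (GNorm E) := wijsTopG E
  letI tW : TopologicalSpace (GWStar E) := vietTopG E
  set Φ : GNorm E → GWStar E := fun V => ⟨perp E V.1, perp_isClosed E V.1⟩ with hΦ
  have hbij : Function.Bijective Φ := by
    constructor
    · intro V₁ V₂ h
      exact PerpHomeo.perp_injective (congrArg Subtype.val h)
    · intro W
      obtain ⟨V, hV⟩ := PerpHomeo.perp_surjective W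
      exact ⟨V, Subtype.ext hV⟩
  set m : GWStar E → Closeds (dualBall E) := fun W =>
    ⟨Subtype.val ⁻¹' (W.1 : Set (WeakDual ℂ E)), W.2.preimage continuous_subtype_val⟩ with hm
  have htW : tW = TopologicalSpace.induced m tC := rfl
  -- continuity of Φ
  have hcontm : Continuous[tG, tC] (fun V : GNorm E => PerpHomeo.ballMap V) := by
    refine continuous_generateFrom_iff.2 ?_
    rintro S (⟨U, hUo, rfl⟩ | ⟨U, hUo, rfl⟩)
    · exact PerpHomeo.lower_open hUo
    · exact PerpHomeo.upper_open hUo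
  have hcont : Continuous[tG, tW] Φ := by
    rw [htW]
    exact continuous_induced_rng.2 hcontm
  -- the equivalence and continuity of the inverse
  set e : GNorm E ≃ GWStar E := Equiv.ofBijective Φ hbij with he
  have key : ∀ x : E, Continuous[tW, inferInstance]
      (fun W : GWStar E => Metric.infDist x (((e.symm W).1 : Submodule ℂ E) : Set E)) := by
    intro x
    rw [OrderTopology.topology_eq_generate_intervals (α := ℝ)]
    refine continuous_generateFrom_iff.2 ?_
    rintro S ⟨a, rfl | rfl⟩
    · have hUx : IsOpen {ν : ↥(dualBall E) | a < ‖(ν : WeakDual ℂ E) x‖} :=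
        isOpen_lt continuous_const
          ((WeakDual.eval_continuous x).comp continuous_subtype_val).norm
      have hset : (fun W : GWStar E =>
            Metric.infDist x (((e.symm W).1 : Submodule ℂ E) : Set E)) ⁻¹' (Set.Ioi a) =
          m ⁻¹' {F : Closeds (dualBall E) |
            ((F : Set ↥(dualBall E)) ∩ {ν : ↥(dualBall E) | a < ‖(ν : WeakDual ℂ E) x‖}).Nonempty} := by
        ext W
        obtain ⟨V, rfl⟩ := e.surjective W
        simp only [Set.mem_preimage, Set.mem_Ioi, Equiv.symm_apply_apply]
        rw [show m (e V) = PerpHomeo.ballMap V from rfl]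
        exact (PerpHomeo.idA V x a).symm
      rw [hset, htW]
      exact isOpen_induced (TopologicalSpace.GenerateOpen.basic _
        (Or.inl ⟨_, hUx, rfl⟩))
    · have hUx : IsOpen {ν : ↥(dualBall E) | ‖(ν : WeakDual ℂ E) x‖ < a} :=
        isOpen_lt ((WeakDual.eval_continuous x).comp continuous_subtype_val).norm
          continuous_const
      have hset : (fun W : GWStar E =>
            Metric.infDist x (((e.symm W).1 : Submodule ℂ E) : Set E)) ⁻¹' (Set.Iio a) =
          m ⁻¹' {F : Closeds (dualBall E) |
            (F : Set ↥(dualBall E)) ⊆ {ν : ↥(dualBall E) | ‖(ν : WeakDual ℂ E) x‖ < a}} := by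
        ext W
        obtain ⟨V, rfl⟩ := e.surjective W
        simp only [Set.mem_preimage, Set.mem_Iio, Equiv.symm_apply_apply]
        rw [show m (e V) = PerpHomeo.ballMap V from rfl]
        exact (PerpHomeo.idB V x a).symm
      rw [hset, htW]
      exact isOpen_induced (TopologicalSpace.GenerateOpen.basic _
        (Or.inr ⟨_, hUx, rfl⟩))
  have hcsymm : Continuous[tW, tG] e.symm := by
    refine continuous_generateFrom_iff.2 ?_
    rintro S ⟨x, Ur, hUr, rfl⟩
    exact (key x).isOpen_preimage Ur hUr
  have hopen : @IsOpenMap _ _ tG tW Φ := by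
    intro Uo hUo
    have himg : Φ '' Uo = e.symm ⁻¹' Uo := by
      ext W
      constructor
      · rintro ⟨V, hV, rfl⟩
        have : e.symm (Φ V) = V := e.symm_apply_apply V
        rwa [Set.mem_preimage, this]
      · intro h
        exact ⟨e.symm W, h, e.apply_symm_apply W⟩
    rw [himg]
    exact hcsymm.isOpen_preimage _ hUo
  exact ⟨hcont, hopen, hbij⟩
end

section
/- (Michael's selection theorem) Let (E, ‖·‖) be a normed vector space, let X be a Polish space, and let C ⊆ E be a convex subset which is complete for the metric d(u,v) = ‖u − v‖. Suppose F assigns to each x ∈ X a nonempty convex subset F(x) of C which is closed in C, and that F is lower continuous, i.e., for every open subset U of C the set {x ∈ X : F(x) ∩ U ≠ ∅} is open in X. Then there is a continuous map f : X → C such that f(x) ∈ F(x) for every x ∈ X. -/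
open TopologicalSpace Set Metric Filter

/-- Approximate selection lemma: a lower semicontinuous multifunction with nonempty convex
values in a convex set `C` admits, for every `ε > 0`, a continuous `ε`-approximate selection
with values in `C`. -/
lemma michael_approx
    {E : Type*} [NormedAddCommGroup E] [NormedSpace ℝ E]
    {X : Type*} [TopologicalSpace X] [NormalSpace X] [ParacompactSpace X]
    {C : Set E} (hCconv : Convex ℝ C)
    (G : X → Set C)
    (hne : ∀ x, (G x).Nonempty)
    (hconv : ∀ x, Convex ℝ (Subtype.val '' G x))
    (hlow : ∀ U : Set C, IsOpen U → IsOpen {x : X | (G x ∩ U).Nonempty})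
    {ε : ℝ} (hε : 0 < ε) :
    ∃ f : X → E, Continuous f ∧ ∀ x, f x ∈ C ∧ ∃ z ∈ G x, ‖f x - (z : E)‖ < ε := by
  set t : X → Set E := fun x => C ∩ thickening ε (Subtype.val '' G x) with ht
  have htconv : ∀ x, Convex ℝ (t x) := fun x => hCconv.inter ((hconv x).thickening ε)
  have H : ∀ x : X, ∃ c : E, ∀ᶠ y in nhds x, c ∈ t y := by
    intro x
    obtain ⟨z, hz⟩ := hne x
    refine ⟨(z : E), ?_⟩
    have hU : IsOpen {y : X | (G y ∩ (Subtype.val ⁻¹' ball (z : E) ε : Set C)).Nonempty} :=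
      hlow _ (isOpen_ball.preimage continuous_subtype_val)
    have hxU : x ∈ {y : X | (G y ∩ (Subtype.val ⁻¹' ball (z : E) ε : Set C)).Nonempty} :=
      ⟨z, hz, by simp [hε]⟩
    filter_upwards [hU.mem_nhds hxU] with y hy
    obtain ⟨w, hwG, hwb⟩ := hy
    refine ⟨z.2, ?_⟩
    rw [mem_thickening_iff]
    exact ⟨(w : E), mem_image_of_mem _ hwG, by rw [dist_comm]; exact hwb⟩
  obtain ⟨g, hg⟩ := exists_continuous_forall_mem_convex_of_local_const htconv H
  refine ⟨g, g.continuous, fun x => ?_⟩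
  obtain ⟨hgC, hgt⟩ := hg x
  rw [mem_thickening_iff] at hgt
  obtain ⟨w, ⟨z, hzG, rfl⟩, hw⟩ := hgt
  exact ⟨hgC, z, hzG, by simpa [dist_eq_norm] using hw⟩

/-- Iteration step: given a continuous `ε`-approximate selection of `F`, produce a continuous
`ε/2`-approximate selection which is uniformly within `2ε` of the previous one. -/
lemma michael_step
    {E : Type*} [NormedAddCommGroup E] [NormedSpace ℝ E]
    {X : Type*} [TopologicalSpace X] [NormalSpace X] [ParacompactSpace X]
    {C : Set E} (hCconv : Convex ℝ C)
    (F : X → Set C)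
    (hconv : ∀ x, Convex ℝ (Subtype.val '' F x))
    (hlow : ∀ U : Set C, IsOpen U → IsOpen {x : X | (F x ∩ U).Nonempty})
    {f : X → E} (hf : Continuous f) {ε : ℝ} (hε : 0 < ε)
    (hfx : ∀ x, ∃ z ∈ F x, ‖f x - (z : E)‖ < ε) :
    ∃ g : X → E, Continuous g ∧ ∀ x, g x ∈ C ∧ (∃ z ∈ F x, ‖g x - (z : E)‖ < ε / 2) ∧
      ‖g x - f x‖ < 2 * ε := by
  set G : X → Set C := fun x => F x ∩ {z : C | ‖f x - (z : E)‖ < ε} with hG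
  have hGne : ∀ x, (G x).Nonempty := by
    intro x
    obtain ⟨z, hz, hzd⟩ := hfx x
    exact ⟨z, hz, hzd⟩
  have hGconv : ∀ x, Convex ℝ (Subtype.val '' G x) := by
    intro x
    have : Subtype.val '' G x = (Subtype.val '' F x) ∩ ball (f x) ε := by
      ext y
      constructor
      · rintro ⟨z, ⟨hzF, hzb⟩, rfl⟩
        refine ⟨mem_image_of_mem _ hzF, ?_⟩
        rw [mem_ball, dist_eq_norm, norm_sub_rev]
        exact hzb
      · rintro ⟨⟨z, hzF, rfl⟩, hb⟩
        rw [mem_ball, dist_eq_norm, norm_sub_rev] at hb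
        exact ⟨z, ⟨hzF, hb⟩, rfl⟩
    rw [this]
    exact (hconv x).inter (convex_ball _ _)
  have hGlow : ∀ U : Set C, IsOpen U → IsOpen {x : X | (G x ∩ U).Nonempty} := by
    intro U hU
    rw [isOpen_iff_mem_nhds]
    rintro x₀ ⟨z, ⟨hzF, hzb⟩, hzU⟩
    set δ : ℝ := (ε - ‖f x₀ - (z : E)‖) / 2 with hδ
    have hδpos : 0 < δ := by
      have h := hzb
      simp only [mem_setOf_eq] at h
      rw [hδ]; linarith
    have hopen : IsOpen ({x : X |
        (F x ∩ (U ∩ Subtype.val ⁻¹' ball (z : E) δ)).Nonempty} ∩ f ⁻¹' ball (f x₀) δ) :=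
      (hlow _ (hU.inter (isOpen_ball.preimage continuous_subtype_val))).inter
        (isOpen_ball.preimage hf)
    have hx₀mem : x₀ ∈ {x : X |
        (F x ∩ (U ∩ Subtype.val ⁻¹' ball (z : E) δ)).Nonempty} ∩ f ⁻¹' ball (f x₀) δ := by
      refine ⟨⟨z, hzF, hzU, by simp [hδpos]⟩, by simp [hδpos]⟩
    filter_upwards [hopen.mem_nhds hx₀mem] with x hx
    obtain ⟨⟨w, hwF, hwU, hwb⟩, hfb⟩ := hx
    refine ⟨w, ⟨hwF, ?_⟩, hwU⟩
    have h1 : ‖f x - f x₀‖ < δ := by simpa [mem_ball, dist_eq_norm] using hfb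
    have h2 : ‖(z : E) - (w : E)‖ < δ := by
      rw [← dist_eq_norm, dist_comm]; exact hwb
    have h3 : ‖f x₀ - (z : E)‖ = ε - 2 * δ := by rw [hδ]; ring
    calc ‖f x - (w : E)‖ ≤ ‖f x - f x₀‖ + ‖f x₀ - (z : E)‖ + ‖(z : E) - (w : E)‖ := by
          have := norm_add₃_le (a := f x - f x₀) (b := f x₀ - (z : E)) (c := (z : E) - (w : E))
          simpa using this
      _ < δ + (ε - 2 * δ) + δ := by rw [h3]; linarith
      _ = ε := by ring
  obtain ⟨g, hgc, hg⟩ := michael_approx hCconv G hGne hGconv hGlow (half_pos hε)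
  refine ⟨g, hgc, fun x => ?_⟩
  obtain ⟨hgC, z, ⟨hzF, hzb⟩, hzd⟩ := hg x
  refine ⟨hgC, ⟨z, hzF, hzd⟩, ?_⟩
  have h1 : ‖f x - (z : E)‖ < ε := hzb
  have htri : ‖g x - f x‖ ≤ ‖g x - (z : E)‖ + ‖(z : E) - f x‖ := by
    simpa using norm_add_le (g x - (z : E)) ((z : E) - f x)
  have h2 : ‖(z : E) - f x‖ = ‖f x - (z : E)‖ := norm_sub_rev _ _
  linarith

/-- **Michael's selection theorem.** Let `E` be a normed vector space, `X` a Polish space, and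
`C ⊆ E` a convex subset which is complete for the norm metric. If `F` assigns to each `x ∈ X` a
nonempty convex subset `F x` of `C`, closed in `C`, and `F` is lower continuous (for every open
subset `U` of `C`, the set `{x | F x ∩ U ≠ ∅}` is open in `X`), then `F` admits a continuous
selection `f : X → C` with `f x ∈ F x` for all `x`. -/
theorem michael_selection
    {E : Type*} [NormedAddCommGroup E] [NormedSpace ℝ E]
    {X : Type*} [TopologicalSpace X] [PolishSpace X]
    {C : Set E} (hCconv : Convex ℝ C) (hCcomp : IsComplete C)
    (F : X → Set C)
    (hne : ∀ x, (F x).Nonempty)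
    (hconv : ∀ x, Convex ℝ (Subtype.val '' F x))
    (hclosed : ∀ x, IsClosed (F x))
    (hlow : ∀ U : Set C, IsOpen U → IsOpen {x : X | (F x ∩ U).Nonempty}) :
    ∃ f : X → C, Continuous f ∧ ∀ x : X, f x ∈ F x := by
  letI := upgradeIsCompletelyMetrizable X
  -- the invariant for the approximation sequence
  set P : ℕ → (X → E) → Prop := fun n f =>
    Continuous f ∧ ∀ x, f x ∈ C ∧ ∃ z ∈ F x, ‖f x - (z : E)‖ < (2 : ℝ)⁻¹ ^ n with hP
  have hstep : ∀ n (f : X → E), P n f →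
      ∃ g, P (n + 1) g ∧ ∀ x, ‖g x - f x‖ < 2 * (2 : ℝ)⁻¹ ^ n := by
    rintro n f ⟨hfc, hfx⟩
    have hεpos : (0 : ℝ) < (2 : ℝ)⁻¹ ^ n := by positivity
    obtain ⟨g, hgc, hg⟩ := michael_step hCconv F hconv hlow hfc hεpos fun x => (hfx x).2
    refine ⟨g, ⟨hgc, fun x => ?_⟩, fun x => (hg x).2.2⟩
    obtain ⟨hgC, ⟨z, hzF, hzd⟩, _⟩ := hg x
    exact ⟨hgC, z, hzF, by rw [pow_succ]; linarith⟩
  have h0 : ∃ f, P 0 f := by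
    obtain ⟨f, hfc, hf⟩ := michael_approx hCconv F hne hconv hlow (ε := 1) one_pos
    exact ⟨f, hfc, fun x => by simpa using hf x⟩
  -- build the sequence by recursion
  have hseq : ∃ u : ℕ → X → E, (∀ n, P n (u n)) ∧
      ∀ n x, ‖u (n + 1) x - u n x‖ < 2 * (2 : ℝ)⁻¹ ^ n := by
    obtain ⟨f₀, hf₀⟩ := h0
    let v : ∀ n : ℕ, {f : X → E // P n f} := fun n =>
      Nat.rec (motive := fun n => {f : X → E // P n f}) ⟨f₀, hf₀⟩
        (fun n p => ⟨(hstep n p.1 p.2).choose, (hstep n p.1 p.2).choose_spec.1⟩) n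
    refine ⟨fun n => (v n).1, fun n => (v n).2, fun n x => ?_⟩
    exact (hstep n (v n).1 (v n).2).choose_spec.2 x
  obtain ⟨u, hu, hud⟩ := hseq
  -- each pointwise sequence is Cauchy with a uniform geometric bound
  have hdist : ∀ n x, dist (u n x) (u (n + 1) x) ≤ 2 * (2 : ℝ)⁻¹ ^ n := by
    intro n x
    rw [dist_eq_norm, norm_sub_rev]
    exact (hud n x).le
  have hcauchy : ∀ x, CauchySeq fun n => u n x := fun x =>
    cauchySeq_of_le_geometric (2 : ℝ)⁻¹ 2 (by norm_num) fun n => hdist n x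
  have hmem : ∀ n x, u n x ∈ C := fun n x => ((hu n).2 x).1
  have hlim : ∀ x, ∃ l ∈ C, Tendsto (fun n => u n x) atTop (nhds l) := fun x =>
    cauchySeq_tendsto_of_isComplete hCcomp (fun n => hmem n x) (hcauchy x)
  choose l hlC hlt using hlim
  -- uniform convergence, hence continuity of the limit
  have hrate : ∀ n x, dist (u n x) (l x) ≤ 2 * (2 : ℝ)⁻¹ ^ n / (1 - 2⁻¹) :=
    fun n x => dist_le_of_le_geometric_of_tendsto (2 : ℝ)⁻¹ 2 (by norm_num)
      (fun m => hdist m x) (hlt x) n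
  have hunif : TendstoUniformly (fun n x => u n x) l atTop := by
    rw [Metric.tendstoUniformly_iff]
    intro ε hε
    have : Tendsto (fun n : ℕ => 2 * (2 : ℝ)⁻¹ ^ n / (1 - 2⁻¹)) atTop (nhds 0) := by
      have h := tendsto_pow_atTop_nhds_zero_of_lt_one (by norm_num : (0:ℝ) ≤ 2⁻¹)
        (by norm_num : (2:ℝ)⁻¹ < 1)
      simpa using (h.const_mul 2).div_const (1 - 2⁻¹)
    filter_upwards [this.eventually (gt_mem_nhds hε)] with n hn x
    calc dist (l x) (u n x) = dist (u n x) (l x) := dist_comm _ _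
      _ ≤ 2 * (2 : ℝ)⁻¹ ^ n / (1 - 2⁻¹) := hrate n x
      _ < ε := hn
  have hlcont : Continuous l := hunif.continuous (Eventually.of_forall fun n => (hu n).1).frequently
  -- the limit is a selection of `F`
  have hsel : ∀ x, (⟨l x, hlC x⟩ : C) ∈ F x := by
    intro x
    have hz : ∀ n, ∃ z ∈ F x, ‖u n x - (z : E)‖ < (2 : ℝ)⁻¹ ^ n := fun n => ((hu n).2 x).2
    choose z hzF hzd using hz
    have hzt : Tendsto (fun n => (z n : E)) atTop (nhds (l x)) := by
      have h1 : Tendsto (fun n => u n x - (z n : E)) atTop (nhds 0) := by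
        have hb : Tendsto (fun n : ℕ => (2 : ℝ)⁻¹ ^ n) atTop (nhds 0) :=
          tendsto_pow_atTop_nhds_zero_of_lt_one (by norm_num) (by norm_num)
        rw [tendsto_zero_iff_norm_tendsto_zero]
        exact squeeze_zero (fun n => norm_nonneg _) (fun n => (hzd n).le) hb
      have := (hlt x).sub h1
      simpa using this
    have hzt' : Tendsto (fun n => z n) atTop (nhds (⟨l x, hlC x⟩ : C)) := by
      rw [Topology.IsEmbedding.subtypeVal.tendsto_nhds_iff]
      exact hzt
    exact (hclosed x).mem_of_tendsto hzt' (Eventually.of_forall hzF)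
  exact ⟨fun x => ⟨l x, hlC x⟩, hlcont.subtype_mk _, hsel⟩
end

section
/- Let (E, ‖·‖) be a normed vector space, let X be a Polish space, and let C ⊆ E be a convex subset which is complete for the metric d(u,v) = ‖u − v‖ and moreover separable. Suppose F assigns to each x ∈ X a nonempty convex subset F(x) of C which is closed in C, and that F is lower continuous, i.e., for every open subset U of C the set {x ∈ X : F(x) ∩ U ≠ ∅} is open in X. Then there is a sequence of continuous maps f_n : X → C such that for every x ∈ X, F(x) equals the closure in C of the set {f_n(x) : n ∈ ℕ}. -/
open TopologicalSpace Set Metric Filter Topology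
set_option linter.unusedSectionVars false

section MichaelAux

variable {E : Type*} [NormedAddCommGroup E] [NormedSpace ℝ E]
variable {X : Type*} [TopologicalSpace X] [NormalSpace X] [ParacompactSpace X]
variable {C : Set E}

theorem michael_approx_s13 (hCconv : Convex ℝ C) (G : X → Set E)
    (h1 : ∀ x, (G x).Nonempty) (h2 : ∀ x, Convex ℝ (G x)) (h3 : ∀ x, G x ⊆ C)
    (h4 : ∀ V : Set E, IsOpen V → IsOpen {x | (G x ∩ V).Nonempty})
    {ε : ℝ} (hε : 0 < ε) :
    ∃ g : X → E, Continuous g ∧ ∀ x, g x ∈ C ∧ ∃ z ∈ G x, dist (g x) z < ε := by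
  have htconv : ∀ x, Convex ℝ (C ∩ thickening ε (G x)) := fun x =>
    hCconv.inter ((h2 x).thickening ε)
  have Hloc : ∀ x : X, ∃ c : E, ∀ᶠ y in 𝓝 x, c ∈ C ∩ thickening ε (G y) := by
    intro x
    obtain ⟨z, hz⟩ := h1 x
    refine ⟨z, ?_⟩
    have hopen := h4 (ball z ε) isOpen_ball
    have hxmem : x ∈ {y | (G y ∩ ball z ε).Nonempty} := ⟨z, hz, mem_ball_self hε⟩
    filter_upwards [hopen.mem_nhds hxmem] with y hy
    obtain ⟨w, hwG, hwb⟩ := hy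
    exact ⟨h3 x hz, mem_thickening_iff.2 ⟨w, hwG, by rw [dist_comm]; exact hwb⟩⟩
  obtain ⟨g, hg⟩ := exists_continuous_forall_mem_convex_of_local_const htconv Hloc
  exact ⟨g, g.continuous, fun x => ⟨(hg x).1, mem_thickening_iff.1 (hg x).2⟩⟩

theorem michael_lsc_inter (G : X → Set E)
    (h4 : ∀ V : Set E, IsOpen V → IsOpen {x | (G x ∩ V).Nonempty})
    {g : X → E} (hg : Continuous g) {ε : ℝ}
    (V : Set E) (hV : IsOpen V) :
    IsOpen {x | (G x ∩ ball (g x) ε ∩ V).Nonempty} := by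
  rw [isOpen_iff_forall_mem_open]
  rintro x₀ ⟨z, ⟨hzG, hzb⟩, hzV⟩
  obtain ⟨δ₂, hδ₂, hballV⟩ := Metric.isOpen_iff.1 hV z hzV
  have hzb' : dist z (g x₀) < ε := mem_ball.1 hzb
  set δ₁ : ℝ := (ε - dist z (g x₀)) / 3 with hδ₁def
  have hδ₁ : 0 < δ₁ := by simp only [hδ₁def]; linarith
  set δ : ℝ := min δ₁ δ₂ with hδdef
  have hδ : 0 < δ := lt_min hδ₁ hδ₂
  refine ⟨{x | (G x ∩ ball z δ).Nonempty} ∩ g ⁻¹' ball (g x₀) δ, ?_, ?_, ?_⟩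
  · rintro x ⟨⟨z', hz'G, hz'b⟩, hgx⟩
    refine ⟨z', ⟨hz'G, ?_⟩, hballV (mem_ball.2 (lt_of_lt_of_le (mem_ball.1 hz'b) (min_le_right _ _)))⟩
    have h1 : dist z' z < δ₁ := lt_of_lt_of_le (mem_ball.1 hz'b) (min_le_left _ _)
    have h2 : dist (g x) (g x₀) < δ₁ := lt_of_lt_of_le (mem_ball.1 hgx) (min_le_left _ _)
    have h3 : dist z' (g x) ≤ dist z' z + dist z (g x₀) + dist (g x₀) (g x) := dist_triangle4 _ _ _ _
    rw [mem_ball]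
    rw [dist_comm (g x₀) (g x)] at h3
    simp only [hδ₁def] at h1 h2
    linarith
  · exact (h4 _ isOpen_ball).inter (isOpen_ball.preimage hg)
  · exact ⟨⟨z, hzG, mem_ball_self hδ⟩, mem_ball_self hδ⟩

theorem michael_core (hCconv : Convex ℝ C) (hCcomp : IsComplete C) (G : X → Set E)
    (h1 : ∀ x, (G x).Nonempty) (h2 : ∀ x, Convex ℝ (G x)) (h3 : ∀ x, G x ⊆ C)
    (h4 : ∀ V : Set E, IsOpen V → IsOpen {x | (G x ∩ V).Nonempty}) :
    ∃ f : X → E, Continuous f ∧ ∀ x, f x ∈ C ∧ f x ∈ closure (G x) := by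
  have hhalf : (0:ℝ) < 1/2 := by norm_num
  set P : (X → E) → ℕ → Prop := fun g n =>
    Continuous g ∧ ∀ x, g x ∈ C ∧ ∃ z ∈ G x, dist (g x) z < (1/2)^n with hP_def
  have step : ∀ n (g : X → E), P g n →
      ∃ g', P g' (n+1) ∧ ∀ x, dist (g' x) (g x) ≤ 3 * (1/2)^(n+1) := by
    intro n g hgP
    obtain ⟨hgc, hgprop⟩ := hgP
    set H : X → Set E := fun x => G x ∩ ball (g x) ((1/2)^n) with hHdef
    have hH1 : ∀ x, (H x).Nonempty := by
      intro x; obtain ⟨z, hz, hd⟩ := (hgprop x).2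
      exact ⟨z, hz, by rw [mem_ball, dist_comm]; exact hd⟩
    have hH2 : ∀ x, Convex ℝ (H x) := fun x => (h2 x).inter (convex_ball _ _)
    have hH3 : ∀ x, H x ⊆ C := fun x => inter_subset_left.trans (h3 x)
    have hH4 : ∀ V : Set E, IsOpen V → IsOpen {x | (H x ∩ V).Nonempty} :=
      fun V hV => michael_lsc_inter G h4 hgc V hV
    obtain ⟨g', hg'c, hg'⟩ := michael_approx_s13 hCconv H hH1 hH2 hH3 hH4 (pow_pos hhalf (n+1))
    refine ⟨g', ⟨hg'c, fun x => ⟨(hg' x).1, ?_⟩⟩, fun x => ?_⟩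
    · obtain ⟨z, ⟨hzG, _⟩, hd⟩ := (hg' x).2; exact ⟨z, hzG, hd⟩
    · obtain ⟨z, ⟨_, hzb⟩, hd⟩ := (hg' x).2
      calc dist (g' x) (g x) ≤ dist (g' x) z + dist z (g x) := dist_triangle _ _ _
        _ ≤ (1/2)^(n+1) + (1/2)^n := add_le_add hd.le (mem_ball.1 hzb).le
        _ = 3 * (1/2)^(n+1) := by ring
  obtain ⟨g0, hg0c, hg0⟩ := michael_approx_s13 hCconv G h1 h2 h3 h4 (by norm_num : (0:ℝ) < 1)
  have hg0P : P g0 0 := ⟨hg0c, fun x => by simpa using hg0 x⟩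
  choose! next hnext1 hnext2 using step
  set u : ℕ → X → E := fun n => Nat.rec g0 (fun n g => next n g) n with hu
  have hP : ∀ n, P (u n) n := by
    intro n; induction n with
    | zero => exact hg0P
    | succ n ih => exact hnext1 n (u n) ih
  have hD : ∀ n x, dist (u n x) (u (n+1) x) ≤ (3/2) * (1/2)^n := by
    intro n x
    have h := hnext2 n (u n) (hP n) x
    rw [dist_comm]
    calc dist (u (n+1) x) (u n x) ≤ 3 * (1/2)^(n+1) := h
      _ = (3/2) * (1/2)^n := by ring
  have hcauchy : ∀ x, CauchySeq fun n => u n x := fun x =>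
    cauchySeq_of_le_geometric (1/2) (3/2) (by norm_num) (fun n => hD n x)
  have hmemC : ∀ x n, u n x ∈ C := fun x n => ((hP n).2 x).1
  have hlim : ∀ x, ∃ y ∈ C, Tendsto (fun n => u n x) atTop (𝓝 y) := fun x =>
    cauchySeq_tendsto_of_isComplete hCcomp (fun n => hmemC x n) (hcauchy x)
  choose f hfC hft using hlim
  have haux : ∀ n : ℕ, (3/2 : ℝ) * (1/2)^n / (1 - 1/2) = 3 * (1/2)^n := by
    intro n; norm_num; ring
  have hdist : ∀ n x, dist (u n x) (f x) ≤ 3 * (1/2)^n := by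
    intro n x
    have h := dist_le_of_le_geometric_of_tendsto (1/2) (3/2) (by norm_num)
      (fun n => hD n x) (hft x) n
    rwa [haux n] at h
  have hunif : TendstoUniformly (fun n x => u n x) f atTop := by
    rw [Metric.tendstoUniformly_iff]
    intro ε hε
    have htend : Tendsto (fun n : ℕ => 3 * (1/2:ℝ)^n) atTop (𝓝 0) := by
      simpa using (tendsto_pow_atTop_nhds_zero_of_lt_one (by norm_num : (0:ℝ) ≤ 1/2)
        (by norm_num : (1/2:ℝ) < 1)).const_mul 3
    filter_upwards [htend.eventually (gt_mem_nhds hε)] with n hn x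
    exact lt_of_le_of_lt (by rw [dist_comm]; exact hdist n x) hn
  have hfc : Continuous f := hunif.continuous (Eventually.of_forall fun n => (hP n).1).frequently
  refine ⟨f, hfc, fun x => ⟨hfC x, ?_⟩⟩
  rw [Metric.mem_closure_iff]
  intro ε hε
  obtain ⟨n, hn⟩ := exists_pow_lt_of_lt_one (show (0:ℝ) < ε/4 by linarith)
    (by norm_num : (1/2:ℝ) < 1)
  obtain ⟨z, hzG, hd⟩ := ((hP n).2 x).2
  refine ⟨z, hzG, ?_⟩
  have h := hdist n x
  calc dist (f x) z ≤ dist (f x) (u n x) + dist (u n x) z := dist_triangle _ _ _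
    _ ≤ 3*(1/2)^n + (1/2)^n := by rw [dist_comm (f x)]; exact add_le_add h hd.le
    _ = 4*(1/2)^n := by ring
    _ < ε := by linarith

end MichaelAux

/-- **Dense version of Michael's selection theorem.** Let `E` be a normed vector space, `X` a
Polish space, and `C ⊆ E` a convex subset which is complete for the norm metric and separable.
If `F` assigns to each `x ∈ X` a nonempty convex subset `F x` of `C`, closed in `C`, and `F` is
lower continuous, then there is a sequence of continuous maps `f n : X → C` such that for every
`x ∈ X`, `F x` is the closure in `C` of `{f n x : n ∈ ℕ}`. -/
theorem michael_selection_dense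
    {E : Type*} [NormedAddCommGroup E] [NormedSpace ℝ E]
    {X : Type*} [TopologicalSpace X] [PolishSpace X]
    {C : Set E} (hCconv : Convex ℝ C) (hCcomp : IsComplete C)
    (hCsep : TopologicalSpace.IsSeparable C)
    (F : X → Set C)
    (hne : ∀ x, (F x).Nonempty)
    (hconv : ∀ x, Convex ℝ (Subtype.val '' F x))
    (hclosed : ∀ x, IsClosed (F x))
    (hlow : ∀ U : Set C, IsOpen U → IsOpen {x : X | (F x ∩ U).Nonempty}) :
    ∃ f : ℕ → X → C, (∀ n, Continuous (f n)) ∧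
      ∀ x : X, F x = closure (Set.range fun n => f n x) := by
  classical
  rcases isEmpty_or_nonempty X with h | h
  · refine ⟨fun n x => isEmptyElim x, fun n => continuous_def.2 fun s hs => ?_,
      fun x => isEmptyElim x⟩
    rw [Set.eq_empty_of_isEmpty (_ ⁻¹' s)]; exact isOpen_empty
  letI := upgradeIsCompletelyMetrizable X
  -- the multimap seen in `E`
  set Fe : X → Set E := fun x => Subtype.val '' F x with hFedef
  have hFeC : ∀ x, Fe x ⊆ C := by rintro x _ ⟨w, hw, rfl⟩; exact w.2
  have hFene : ∀ x, (Fe x).Nonempty := fun x => (hne x).image _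
  have hFelsc : ∀ V : Set E, IsOpen V → IsOpen {x | (Fe x ∩ V).Nonempty} := by
    intro V hV
    have heq : {x | (Fe x ∩ V).Nonempty} = {x | (F x ∩ (Subtype.val ⁻¹' V)).Nonempty} := by
      ext x
      constructor
      · rintro ⟨z, ⟨w, hw, rfl⟩, hzV⟩; exact ⟨w, hw, hzV⟩
      · rintro ⟨w, hw, hwV⟩; exact ⟨w.1, ⟨w, hw, rfl⟩, hwV⟩
    rw [heq]; exact hlow _ (hV.preimage continuous_subtype_val)
  have hFeclosed : ∀ x, IsClosed (Fe x) :=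
    fun x => (hCcomp.isClosed.isClosedEmbedding_subtypeVal).isClosedMap _ (hclosed x)
  -- a дense sequence in C
  obtain ⟨c, hcc, hcd⟩ := hCsep
  obtain ⟨v₀, hv₀⟩ := hne h.some
  obtain ⟨u, hu⟩ := (hcc.insert (v₀ : E)).exists_eq_range (insert_nonempty _ _)
  have hdense : ∀ w ∈ C, ∀ δ : ℝ, 0 < δ → ∃ m : ℕ, dist w (u m) < δ := by
    intro w hw δ hδ
    have hmem : w ∈ closure (insert (v₀ : E) c) :=
      closure_mono (subset_insert _ _) (hcd hw)
    rw [hu] at hmem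
    obtain ⟨z, hz, hdz⟩ := Metric.mem_closure_iff.1 hmem δ hδ
    obtain ⟨m, rfl⟩ := hz
    exact ⟨m, hdz⟩
  -- base selection
  obtain ⟨f₀, hf₀c, hf₀⟩ := michael_core hCconv hCcomp Fe hFene hconv hFeC hFelsc
  have hf₀F : ∀ x, f₀ x ∈ Fe x := by
    intro x
    have := (hf₀ x).2
    rwa [(hFeclosed x).closure_eq] at this
  -- the key local family
  have key : ∀ m k : ℕ, ∃ h : ℕ → X → E,
      (∀ j, Continuous (h j)) ∧ (∀ j x, h j x ∈ Fe x) ∧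
      (∀ x, (Fe x ∩ ball (u m) ((1/2)^k)).Nonempty →
        ∃ j, dist (h j x) (u m) ≤ (1/2)^k) := by
    intro m k
    set r : ℝ := (1/2)^k with hrdef
    have hr : 0 < r := pow_pos (by norm_num) k
    set U : Set X := {x | (Fe x ∩ ball (u m) r).Nonempty} with hUdef
    have hUopen : IsOpen U := hFelsc _ isOpen_ball
    set G : ↥U → Set E := fun y => Fe y.1 ∩ ball (u m) r with hGdef
    have hG1 : ∀ y : ↥U, (G y).Nonempty := fun y => y.2
    have hG2 : ∀ y, Convex ℝ (G y) := fun y => (hconv y.1).inter (convex_ball _ _)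
    have hG3 : ∀ y, G y ⊆ C := fun y => inter_subset_left.trans (hFeC y.1)
    have hG4 : ∀ V : Set E, IsOpen V → IsOpen {y : ↥U | (G y ∩ V).Nonempty} := by
      intro V hV
      have heq : {y : ↥U | (G y ∩ V).Nonempty} =
          Subtype.val ⁻¹' {x | (Fe x ∩ (ball (u m) r ∩ V)).Nonempty} := by
        ext y
        simp only [hGdef, mem_setOf_eq, mem_preimage, inter_assoc]
      rw [heq]
      exact (hFelsc _ (isOpen_ball.inter hV)).preimage continuous_subtype_val
    obtain ⟨g, hgc, hg⟩ := michael_core hCconv hCcomp G hG1 hG2 hG3 hG4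
    have hgFe : ∀ y : ↥U, g y ∈ Fe y.1 := fun y =>
      closure_minimal inter_subset_left (hFeclosed y.1) (hg y).2
    have hgball : ∀ y : ↥U, dist (g y) (u m) ≤ r := fun y =>
      mem_closedBall.1 (closure_minimal (inter_subset_right.trans ball_subset_closedBall)
        isClosed_closedBall (hg y).2)
    -- cutoff functions
    set φ : ℕ → X → ℝ := fun j x =>
      if Uᶜ = ∅ then 1 else min 1 ((j : ℝ) * Metric.infDist x Uᶜ) with hφdef
    have hφc : ∀ j, Continuous (φ j) := by
      intro j
      by_cases hUc : Uᶜ = ∅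
      · simp only [hφdef, if_pos hUc]; exact continuous_const
      · simp only [hφdef, if_neg hUc]
        exact continuous_const.min (continuous_const.mul (Metric.continuous_infDist_pt _))
    have hφ0 : ∀ j, ∀ x ∉ U, φ j x = 0 := by
      intro j x hx
      have hx' : x ∈ Uᶜ := hx
      simp only [hφdef, if_neg (Nonempty.ne_empty ⟨x, hx'⟩)]
      rw [Metric.infDist_zero_of_mem hx', mul_zero]
      exact min_eq_right zero_le_one
    have hφ01 : ∀ j x, 0 ≤ φ j x ∧ φ j x ≤ 1 := by
      intro j x
      by_cases hUc : Uᶜ = ∅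
      · simp only [hφdef, if_pos hUc]; exact ⟨zero_le_one, le_refl 1⟩
      · simp only [hφdef, if_neg hUc]
        exact ⟨le_min zero_le_one
          (mul_nonneg (Nat.cast_nonneg j) Metric.infDist_nonneg), min_le_left _ _⟩
    have hφ1 : ∀ x ∈ U, ∃ j, φ j x = 1 := by
      intro x hx
      by_cases hUc : Uᶜ = ∅
      · exact ⟨0, by simp only [hφdef, if_pos hUc]⟩
      · have hUcne : Uᶜ.Nonempty := nonempty_iff_ne_empty.2 hUc
        have hd : 0 < Metric.infDist x Uᶜ := by
          rw [← (hUopen.isClosed_compl.notMem_iff_infDist_pos hUcne)]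
          simpa using hx
        obtain ⟨j, hj⟩ := exists_nat_ge (1 / Metric.infDist x Uᶜ)
        refine ⟨j, ?_⟩
        simp only [hφdef, if_neg hUc]
        rw [min_eq_left]
        have h := mul_le_mul_of_nonneg_right hj hd.le
        rwa [one_div_mul_cancel hd.ne'] at h
    -- the patched maps
    set q : ℕ → X → E := fun j x =>
      if hx : x ∈ U then φ j x • (g ⟨x, hx⟩ - f₀ x) else 0 with hqdef
    have hqU : ∀ j (y : ↥U), q j y.1 = φ j y.1 • (g y - f₀ y.1) := by
      intro j y
      simp only [hqdef, dif_pos y.2, Subtype.coe_eta]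
    have hq_eq : ∀ j x (hx : x ∈ U), q j x = φ j x • (g ⟨x, hx⟩ - f₀ x) :=
      fun j x hx => dif_pos hx
    have hq_eq0 : ∀ j x, x ∉ U → q j x = 0 := fun j x hx => dif_neg hx
    have hqbound : ∀ j x, ‖q j x‖ ≤ φ j x * (r + ‖u m‖ + ‖f₀ x‖) := by
      intro j x
      by_cases hx : x ∈ U
      · rw [hq_eq j x hx]
        rw [norm_smul, Real.norm_eq_abs, abs_of_nonneg (hφ01 j x).1]
        refine mul_le_mul_of_nonneg_left ?_ (hφ01 j x).1
        have hgb : ‖g ⟨x, hx⟩‖ ≤ r + ‖u m‖ := by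
          calc ‖g ⟨x, hx⟩‖ = ‖(g ⟨x, hx⟩ - u m) + u m‖ := by
                congr 1; abel
            _ ≤ ‖g ⟨x, hx⟩ - u m‖ + ‖u m‖ := norm_add_le _ _
            _ ≤ r + ‖u m‖ := by
                have := hgball ⟨x, hx⟩
                rw [dist_eq_norm] at this
                linarith
        calc ‖g ⟨x, hx⟩ - f₀ x‖ ≤ ‖g ⟨x, hx⟩‖ + ‖f₀ x‖ := norm_sub_le _ _
          _ ≤ r + ‖u m‖ + ‖f₀ x‖ := by linarith
      · rw [hq_eq0 j x hx, norm_zero]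
        have : (0:ℝ) ≤ r + ‖u m‖ + ‖f₀ x‖ := by positivity
        exact mul_nonneg (hφ01 j x).1 this
    have hqcont : ∀ j, Continuous (q j) := by
      intro j
      have hBc : Continuous (fun x => φ j x * (r + ‖u m‖ + ‖f₀ x‖)) :=
        (hφc j).mul (continuous_const.add hf₀c.norm)
      rw [continuous_iff_continuousAt]
      intro x
      by_cases hx : x ∈ U
      · have hcontOn : ContinuousOn (q j) U := by
          rw [continuousOn_iff_continuous_restrict]
          have heq : U.domRestrict (q j) = fun y : ↥U => φ j y.1 • (g y - f₀ y.1) :=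
            funext fun y => hqU j y
          rw [heq]
          exact ((hφc j).comp continuous_subtype_val).smul
            (hgc.sub (hf₀c.comp continuous_subtype_val))
        exact hcontOn.continuousAt (hUopen.mem_nhds hx)
      · have hqx : q j x = 0 := hq_eq0 j x hx
        unfold ContinuousAt
        rw [hqx]
        apply squeeze_zero_norm (fun y => hqbound j y)
        have htt := hBc.tendsto x
        rw [hφ0 j x hx, zero_mul] at htt
        exact htt
    refine ⟨fun j x => f₀ x + q j x, fun j => hf₀c.add (hqcont j), ?_, ?_⟩
    · intro j x
      show f₀ x + q j x ∈ Fe x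
      by_cases hx : x ∈ U
      · have heq : f₀ x + q j x = (1 - φ j x) • f₀ x + φ j x • g ⟨x, hx⟩ := by
          rw [hq_eq j x hx, smul_sub, sub_smul, one_smul]
          abel
        rw [heq]
        exact (hconv x) (hf₀F x) (hgFe ⟨x, hx⟩) (sub_nonneg.2 (hφ01 j x).2)
          (hφ01 j x).1 (by ring)
      · rw [hq_eq0 j x hx, add_zero]
        exact hf₀F x
    · intro x hxU
      obtain ⟨j, hj⟩ := hφ1 x hxU
      refine ⟨j, ?_⟩
      show dist (f₀ x + q j x) (u m) ≤ r
      have heq : f₀ x + q j x = g ⟨x, hxU⟩ := by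
        rw [hq_eq j x hxU, hj, one_smul]
        abel
      rw [heq]
      exact hgball ⟨x, hxU⟩
  choose hfam hfamc hfammem hfamapprox using key
  set e : ℕ ≃ ℕ × ℕ × ℕ := (Denumerable.eqv (ℕ × ℕ × ℕ)).symm with hedef
  set fE : ℕ → X → E := fun n => hfam (e n).1 (e n).2.1 (e n).2.2 with hfEdef
  have hfEFe : ∀ n x, fE n x ∈ Fe x := fun n x => hfammem _ _ _ x
  have hfEC : ∀ n x, fE n x ∈ C := fun n x => hFeC x (hfEFe n x)
  refine ⟨fun n x => ⟨fE n x, hfEC n x⟩, fun n => (hfamc _ _ _).subtype_mk _, ?_⟩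
  intro x
  apply Subset.antisymm
  · intro v hv
    rw [Metric.mem_closure_iff]
    intro ε hε
    obtain ⟨k, hk⟩ := exists_pow_lt_of_lt_one (half_pos hε) (by norm_num : (1/2:ℝ) < 1)
    obtain ⟨m, hm⟩ := hdense v.1 v.2 ((1/2)^k) (pow_pos (by norm_num) k)
    have hxU : (Fe x ∩ ball (u m) ((1/2)^k)).Nonempty :=
      ⟨v.1, ⟨v, hv, rfl⟩, mem_ball.2 hm⟩
    obtain ⟨j, hj⟩ := hfamapprox m k x hxU
    refine ⟨_, mem_range_self (e.symm (m, k, j)), ?_⟩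
    have hn : e (e.symm (m, k, j)) = (m, k, j) := e.apply_symm_apply _
    rw [Subtype.dist_eq]
    have hval : (fE (e.symm (m, k, j)) x : E) = hfam m k j x := by
      simp only [hfEdef, hn]
    simp only [hval]
    calc dist (v : E) (hfam m k j x)
        ≤ dist (v : E) (u m) + dist (u m) (hfam m k j x) := dist_triangle _ _ _
      _ ≤ (1/2)^k + (1/2)^k := add_le_add hm.le (by rw [dist_comm]; exact hj)
      _ < ε/2 + ε/2 := add_lt_add hk hk
      _ = ε := by ring
  · refine closure_minimal ?_ (hclosed x)
    rintro _ ⟨n, rfl⟩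
    show (⟨fE n x, hfEC n x⟩ : ↥C) ∈ F x
    obtain ⟨w, hw, hwe⟩ := hfEFe n x
    have heq : (⟨fE n x, hfEC n x⟩ : ↥C) = w := Subtype.ext hwe.symm
    rw [heq]
    exact hw
end
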